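/- arXiv:1601.02552 — 4 statements merged into one kernel-verified Lean document; each statement's English description precedes it below -/
import Mathlib

section
/- (Radial Hardy-type pointwise decay on hyperbolic space.) There exists a constant C > 0 such that for every continuously differentiable function u : (0,∞) → ℝ with ∫₀^∞ (u'(r)² + u(r)²)·sinh(r)² dr ≤ 1, one has |u(r)| ≤ C·e^{−3r/4} for every r ≥ 10. -/
open MeasureTheory Set
lemma sinh_lower_aux {s : ℝ} (hs : 1 ≤ s) : Real.exp s / 3 ≤ Real.sinh s := by
  have h1 : Real.exp (-s) * Real.exp (2 * s) = Real.exp s := by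
    rw [← Real.exp_add]; ring_nf
  have h2 : (3:ℝ) ≤ Real.exp (2 * s) := by
    have h := Real.add_one_le_exp (2:ℝ)
    have hm : Real.exp 2 ≤ Real.exp (2 * s) := Real.exp_le_exp.2 (by linarith)
    linarith
  have h3 := Real.exp_pos s
  have h4 := Real.exp_pos (-s)
  rw [Real.sinh_eq]
  nlinarith

/-- Radial Hardy-type pointwise decay on hyperbolic space: a radial function
with H¹(H³) norm at most one decays like `e^{-3r/4}` for `r ≥ 10`. -/
theorem radial_hardy_decay :
    ∃ C > (0 : ℝ), ∀ u : ℝ → ℝ, ContDiffOn ℝ 1 u (Ioi 0) →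
      IntegrableOn (fun r => ((deriv u r) ^ 2 + u r ^ 2) * Real.sinh r ^ 2) (Ioi 0) →
      (∫ r in Ioi (0:ℝ), ((deriv u r) ^ 2 + u r ^ 2) * Real.sinh r ^ 2) ≤ 1 →
      ∀ r ≥ (10 : ℝ), |u r| ≤ C * Real.exp (-(3 * r / 4)) := by
  refine ⟨5, by norm_num, ?_⟩
  intro u hu hInt hI r hr
  set f : ℝ → ℝ := fun s => ((deriv u s) ^ 2 + u s ^ 2) * Real.sinh s ^ 2 with hfdef
  have hIcc_sub : Icc r (r+1) ⊆ Ioi 0 := fun x hx => lt_of_lt_of_le (by linarith) hx.1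
  have hucont : ContinuousOn u (Ioi 0) := hu.continuousOn
  have hdcont : ContinuousOn (deriv u) (Ioi 0) :=
    hu.continuousOn_deriv_of_isOpen isOpen_Ioi le_rfl
  have hgcont : ContinuousOn (fun s => deriv u s ^ 2 + u s ^ 2) (Ioi 0) :=
    (hdcont.pow 2).add (hucont.pow 2)
  have hfnn : ∀ s, 0 ≤ f s := fun s =>
    mul_nonneg (by positivity) (sq_nonneg _)
  have hIccInt : IntegrableOn f (Icc r (r+1)) := hInt.mono_set hIcc_sub
  have hIccle : ∫ s in Icc r (r+1), f s ≤ 1 := by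
    refine le_trans ?_ hI
    exact setIntegral_mono_set hInt (ae_of_all _ hfnn)
      (HasSubset.Subset.eventuallyLE hIcc_sub)
  -- sinh lower bound on [r, r+1]
  have hsinh : ∀ s ∈ Icc r (r+1), Real.exp (2*r) / 9 ≤ Real.sinh s ^ 2 := by
    intro s hs
    have h1 : (1:ℝ) ≤ s := by linarith [hs.1]
    have h2 : Real.exp r / 3 ≤ Real.sinh s := by
      refine le_trans ?_ (sinh_lower_aux h1)
      have := Real.exp_le_exp.2 hs.1
      linarith
    have h3 : (Real.exp r / 3) ^ 2 ≤ Real.sinh s ^ 2 :=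
      pow_le_pow_left₀ (by positivity) h2 2
    have h4 : Real.exp r * Real.exp r = Real.exp (2*r) := by
      rw [← Real.exp_add]; ring_nf
    nlinarith
  have hB1 : Real.exp (-(2*r)) * Real.exp (2*r) = 1 := by
    rw [← Real.exp_add]; simp
  have hBpos := Real.exp_pos (-(2*r))
  have hEpos := Real.exp_pos (2*r)
  -- find a good point s in [r, r+1]
  have hex : ∃ s ∈ Icc r (r+1), u s ^ 2 ≤ 10 * Real.exp (-(2*r)) := by
    by_contra hcon
    push_neg at hcon
    have hlow : ∀ s ∈ Icc r (r+1), (10:ℝ)/9 ≤ f s := by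
      intro s hs
      have h1 := le_of_lt (hcon s hs)
      have h2 := hsinh s hs
      have h3 : 0 ≤ u s ^ 2 := sq_nonneg _
      have h4 : 0 ≤ deriv u s ^ 2 := sq_nonneg _
      have h5 : u s ^ 2 * (Real.exp (2*r) / 9) ≤ u s ^ 2 * Real.sinh s ^ 2 :=
        mul_le_mul_of_nonneg_left h2 h3
      have h6 : (10 * Real.exp (-(2*r))) * (Real.exp (2*r) / 9) ≤
          u s ^ 2 * (Real.exp (2*r) / 9) := by
        apply mul_le_mul_of_nonneg_right h1
        positivity
      have h7 : (10 * Real.exp (-(2*r))) * (Real.exp (2*r) / 9) = 10/9 := by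
        field_simp
        nlinarith
      have h8 : 0 ≤ deriv u s ^ 2 * Real.sinh s ^ 2 := by positivity
      simp only [hfdef]
      nlinarith
    have hkey : (10:ℝ)/9 * (volume (Icc r (r+1))).toReal ≤ ∫ s in Icc r (r+1), f s :=
      setIntegral_ge_of_const_le_real measurableSet_Icc (by simp) hlow hIccInt
    rw [Real.volume_Icc] at hkey
    simp only [add_sub_cancel_left] at hkey
    rw [ENNReal.toReal_ofReal (by norm_num)] at hkey
    linarith
  obtain ⟨s, hs, hus⟩ := hex
  have hrs : r ≤ s := hs.1
  have hsr1 : s ≤ r + 1 := hs.2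
  have hsub2 : Icc r s ⊆ Ioi 0 := fun x hx => lt_of_lt_of_le (by linarith) hx.1
  -- FTC for u^2
  have hderiv : ∀ t ∈ uIcc r s, HasDerivAt (fun x => u x ^ 2) (2 * u t * deriv u t) t := by
    intro t ht
    rw [uIcc_of_le hrs] at ht
    have htpos : t ∈ Ioi 0 := hsub2 ht
    have hud : DifferentiableAt ℝ u t :=
      (hu.differentiableOn one_ne_zero).differentiableAt (isOpen_Ioi.mem_nhds htpos)
    have h := hud.hasDerivAt.fun_pow 2
    rw [show (2 * u t * deriv u t) = ((2:ℕ):ℝ) * u t ^ (2 - 1) * deriv u t by simp]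
    exact h
  have hcont_int : IntervalIntegrable (fun t => 2 * u t * deriv u t) volume r s := by
    apply ContinuousOn.intervalIntegrable
    rw [uIcc_of_le hrs]
    exact (continuousOn_const.mul (hucont.mono hsub2)).mul (hdcont.mono hsub2)
  have hftc := intervalIntegral.integral_eq_sub_of_hasDerivAt hderiv hcont_int
  have hg_int : IntervalIntegrable (fun t => deriv u t ^ 2 + u t ^ 2) volume r s := by
    apply ContinuousOn.intervalIntegrable
    rw [uIcc_of_le hrs]
    exact hgcont.mono hsub2
  have habs : |∫ t in r..s, 2 * u t * deriv u t| ≤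
      ∫ t in r..s, (deriv u t ^ 2 + u t ^ 2) := by
    refine le_trans (intervalIntegral.abs_integral_le_integral_abs hrs) ?_
    refine intervalIntegral.integral_mono_on hrs hcont_int.abs hg_int ?_
    intro t ht
    rw [abs_le]
    constructor <;> nlinarith [sq_nonneg (u t - deriv u t), sq_nonneg (u t + deriv u t)]
  -- bound ∫_r^s (u'^2 + u^2)
  have hgIccInt : IntegrableOn (fun t => deriv u t ^ 2 + u t ^ 2) (Icc r (r+1)) :=
    (hgcont.mono hIcc_sub).integrableOn_compact isCompact_Icc
  have hbound : ∫ t in r..s, (deriv u t ^ 2 + u t ^ 2) ≤ 9 * Real.exp (-(2*r)) := by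
    rw [intervalIntegral.integral_of_le hrs]
    have step1 : ∫ t in Ioc r s, (deriv u t ^ 2 + u t ^ 2) ≤
        ∫ t in Icc r (r+1), (deriv u t ^ 2 + u t ^ 2) := by
      refine setIntegral_mono_set hgIccInt (ae_of_all _ fun t => by positivity) ?_
      refine HasSubset.Subset.eventuallyLE fun x hx => ?_
      exact ⟨le_of_lt hx.1, le_trans hx.2 hsr1⟩
    have step2 : ∫ t in Icc r (r+1), (deriv u t ^ 2 + u t ^ 2) ≤
        ∫ t in Icc r (r+1), 9 * Real.exp (-(2*r)) * f t := by
      refine setIntegral_mono_on hgIccInt (hIccInt.const_mul _) measurableSet_Icc ?_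
      intro t ht
      have h2 := hsinh t ht
      have hg0 : (0:ℝ) ≤ deriv u t ^ 2 + u t ^ 2 := by positivity
      have key : (deriv u t ^ 2 + u t ^ 2) * (Real.exp (2*r) / 9) ≤
          (deriv u t ^ 2 + u t ^ 2) * Real.sinh t ^ 2 :=
        mul_le_mul_of_nonneg_left h2 hg0
      simp only [hfdef]
      nlinarith
    have step3 : ∫ t in Icc r (r+1), 9 * Real.exp (-(2*r)) * f t ≤
        9 * Real.exp (-(2*r)) := by
      rw [integral_const_mul]
      nlinarith
    linarith
  -- combine
  have hsq : u r ^ 2 ≤ 19 * Real.exp (-(2*r)) := by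
    have h1 : u r ^ 2 = u s ^ 2 - ∫ t in r..s, 2 * u t * deriv u t := by
      rw [hftc]; ring
    have h2 : -(∫ t in r..s, 2 * u t * deriv u t) ≤
        ∫ t in r..s, (deriv u t ^ 2 + u t ^ 2) := le_trans (neg_le_abs _) habs
    linarith
  have hE2 : Real.exp (-r) * Real.exp (-r) = Real.exp (-(2*r)) := by
    rw [← Real.exp_add]; ring_nf
  have hfin : |u r| ≤ 5 * Real.exp (-r) := by
    have h1 : u r ^ 2 ≤ (5 * Real.exp (-r)) ^ 2 := by nlinarith [Real.exp_pos (-r)]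
    have h2 := Real.sqrt_le_sqrt h1
    rwa [Real.sqrt_sq_eq_abs, Real.sqrt_sq (by positivity)] at h2
  refine le_trans hfin ?_
  have : Real.exp (-r) ≤ Real.exp (-(3 * r / 4)) := Real.exp_le_exp.2 (by linarith)
  linarith
end

section
/- (Small functions have functional value near 1/2.) For every σ > 0 there exists ε > 0 such that every f ∈ H¹_rad(H³) with f not identically zero and ‖f‖_{H¹} ≤ ε satisfies J(f) ≥ 1/2 − σ. -/
open MeasureTheory Set Filter

/-- Squared L²(H³) norm of the hyperbolic gradient of a radial function
with profile `f`:  `K(f) = 4π ∫₀^∞ f'(r)² sinh(r)² dr`. -/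
noncomputable def Kh (f : ℝ → ℝ) : ℝ :=
  4 * Real.pi * ∫ r in Ioi (0:ℝ), (deriv f r) ^ 2 * Real.sinh r ^ 2

/-- Squared L²(H³) norm: `M(f) = 4π ∫₀^∞ f(r)² sinh(r)² dr`. -/
noncomputable def Mh (f : ℝ → ℝ) : ℝ :=
  4 * Real.pi * ∫ r in Ioi (0:ℝ), f r ^ 2 * Real.sinh r ^ 2

/-- Sixth power of the L⁶(H³) norm: `P(f) = 4π ∫₀^∞ f(r)⁶ sinh(r)² dr`. -/
noncomputable def Ph (f : ℝ → ℝ) : ℝ :=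
  4 * Real.pi * ∫ r in Ioi (0:ℝ), f r ^ 6 * Real.sinh r ^ 2

/-- Energy `E(f) = K(f)/2 − P(f)/6`. -/
noncomputable def Eh (f : ℝ → ℝ) : ℝ := Kh f / 2 - Ph f / 6

/-- The functional `J(f) = E(f)/M(f)`. -/
noncomputable def Jh (f : ℝ → ℝ) : ℝ := Eh f / Mh f

/-- `f ∈ H¹_rad(H³)`: `f` is C¹ on `(0,∞)` and `K(f) + M(f) < ∞`
(expressed as integrability of the two nonnegative integrands). -/
def H1rad (f : ℝ → ℝ) : Prop :=
  ContDiffOn ℝ 1 f (Ioi 0) ∧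
  IntegrableOn (fun r => (deriv f r) ^ 2 * Real.sinh r ^ 2) (Ioi 0) ∧
  IntegrableOn (fun r => f r ^ 2 * Real.sinh r ^ 2) (Ioi 0)

/-- The H¹(H³) norm `(K(f) + M(f))^{1/2}`. -/
noncomputable def H1norm (f : ℝ → ℝ) : ℝ := Real.sqrt (Kh f + Mh f)

/-- The set `Ω`. -/
def OmegaSet : Set (ℝ → ℝ) :=
  {f | H1rad f ∧ (∃ r > 0, f r ≠ 0) ∧
    Eh f < Real.sqrt 3 * Real.pi ^ 2 / 4 ∧
    Kh f < 3 * Real.sqrt 3 * Real.pi ^ 2 / 4}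

lemma exhaust_bound {h : ℝ → ℝ} {C : ℝ}
    (hint : IntegrableOn h (Ioi (0:ℝ)))
    (hb : ∀ a b : ℝ, 0 < a → (∫ x in Ioc a b, h x) ≤ C) :
    (∫ x in Ioi (0:ℝ), h x) ≤ C := by
  have hmono : Monotone (fun n : ℕ => Ioc (1/(n+1) : ℝ) (n+1)) := by
    intro m n hmn
    apply Ioc_subset_Ioc
    · apply one_div_le_one_div_of_le (by positivity)
      exact_mod_cast by exact_mod_cast Nat.succ_le_succ hmn
    · exact_mod_cast by exact_mod_cast Nat.succ_le_succ hmn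
  have hunion : (⋃ n : ℕ, Ioc (1/(n+1) : ℝ) (n+1)) = Ioi (0:ℝ) := by
    ext x
    simp only [mem_iUnion, mem_Ioc, mem_Ioi]
    constructor
    · rintro ⟨n, h1, h2⟩; exact lt_trans (by positivity) h1
    · intro hx
      obtain ⟨n, hn⟩ := exists_nat_gt (max (1/x) x)
      refine ⟨n, ?_, ?_⟩
      · have h1 : 1/x < (n:ℝ)+1 := ((le_max_left _ _).trans_lt hn).trans (lt_add_one _)
        rw [div_lt_iff₀ hx] at h1
        rw [div_lt_iff₀ (by positivity)]
        nlinarith [hx]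
      · exact (((le_max_right _ _).trans_lt hn).trans (lt_add_one _)).le
  have := tendsto_setIntegral_of_monotone (fun n => measurableSet_Ioc) hmono
    (by rw [hunion]; exact hint)
  rw [hunion] at this
  exact le_of_tendsto' this (fun n => hb _ _ (by positivity))

lemma exhaust_integrable {h : ℝ → ℝ} {C : ℝ}
    (hc : ContinuousOn h (Ioi (0:ℝ)))
    (hpos : ∀ x ∈ Ioi (0:ℝ), 0 ≤ h x)
    (hb : ∀ a b : ℝ, 0 < a → (∫ x in Ioc a b, h x) ≤ C) :
    IntegrableOn h (Ioi (0:ℝ)) := by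
  have hIcc : ∀ a b : ℝ, 0 < a → IntegrableOn h (Ioc a b) := by
    intro a b ha
    have hsub : Icc a b ⊆ Ioi 0 := fun x hx => lt_of_lt_of_le ha hx.1
    exact ((hc.mono hsub).integrableOn_Icc).mono_set Ioc_subset_Icc_self
  have hnorm : ∀ a b : ℝ, 0 < a → (∫ x in Ioc a b, ‖h x‖) ≤ C := by
    intro a b ha
    rw [setIntegral_congr_fun measurableSet_Ioc
      (fun x hx => Real.norm_of_nonneg (hpos x (lt_trans ha hx.1)))]
    exact hb a b ha
  have h1 : IntegrableOn h (Ioc (0:ℝ) 1) := by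
    refine integrableOn_Ioc_of_intervalIntegral_norm_bounded_left
      (a := fun n : ℕ => 1/(n+1:ℝ)) (l := atTop) (I := C)
      (fun i => hIcc _ _ (by positivity)) tendsto_one_div_add_atTop_nhds_zero_nat ?_
    exact Eventually.of_forall fun i => hnorm _ _ (by positivity)
  have h2 : IntegrableOn h (Ioi (1:ℝ)) := by
    refine integrableOn_Ioi_of_intervalIntegral_norm_bounded C 1
      (b := fun n : ℕ => (n:ℝ)) (l := atTop)
      (fun i => hIcc _ _ one_pos) tendsto_natCast_atTop_atTop ?_
    filter_upwards [eventually_ge_atTop 1] with i hi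
    rw [intervalIntegral.integral_of_le (by exact_mod_cast hi)]
    exact hnorm _ _ one_pos
  have : IntegrableOn h (Ioc (0:ℝ) 1 ∪ Ioi 1) := h1.union h2
  rwa [Ioc_union_Ioi_eq_Ioi (by norm_num : (0:ℝ) ≤ 1)] at this


noncomputable def auxK (f : ℝ → ℝ) : ℝ := ∫ r in Ioi (0:ℝ), (deriv f r)^2 * Real.sinh r^2
noncomputable def auxg (f : ℝ → ℝ) (r : ℝ) : ℝ := f r * Real.sinh r
noncomputable def auxgd (f : ℝ → ℝ) (r : ℝ) : ℝ := deriv f r * Real.sinh r + f r * Real.cosh r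
noncomputable def auxphi (f : ℝ → ℝ) (r : ℝ) : ℝ := (f r)^2 * Real.sinh r * Real.cosh r

variable {f : ℝ → ℝ}

lemma aux_contf (hf : H1rad f) : ContinuousOn f (Ioi 0) := hf.1.continuousOn

lemma aux_contd (hf : H1rad f) : ContinuousOn (deriv f) (Ioi 0) :=
  hf.1.continuousOn_deriv_of_isOpen isOpen_Ioi le_rfl

lemma aux_hasDeriv (hf : H1rad f) : ∀ r ∈ Ioi (0:ℝ), HasDerivAt f (deriv f r) r := by
  intro r hr
  exact ((hf.1.differentiableOn one_ne_zero).differentiableAt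
    (isOpen_Ioi.mem_nhds hr)).hasDerivAt

lemma auxg_hasDeriv (hf : H1rad f) : ∀ r ∈ Ioi (0:ℝ), HasDerivAt (auxg f) (auxgd f r) r := by
  intro r hr
  exact (aux_hasDeriv hf r hr).mul (Real.hasDerivAt_sinh r)

lemma auxphi_hasDeriv (hf : H1rad f) : ∀ r ∈ Ioi (0:ℝ),
    HasDerivAt (auxphi f)
      (auxgd f r^2 + (f r)^2 * Real.sinh r^2 - (deriv f r)^2 * Real.sinh r^2) r := by
  intro r hr
  have h1 : HasDerivAt (fun x => (f x)^2) (2 * f r ^ 1 * deriv f r) r :=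
    (aux_hasDeriv hf r hr).pow 2
  have h2 := ((h1.mul (Real.hasDerivAt_sinh r)).mul (Real.hasDerivAt_cosh r))
  refine h2.congr_deriv ?_
  simp only [auxgd, Pi.mul_apply]
  ring

lemma aux_K_nonneg (hf : H1rad f) : 0 ≤ auxK f :=
  setIntegral_nonneg measurableSet_Ioi (fun x _ => by positivity)

lemma aux_Ksub (hf : H1rad f) {a b : ℝ} (ha : 0 < a) :
    (∫ x in Ioc a b, (deriv f x)^2 * Real.sinh x^2) ≤ auxK f := by
  apply setIntegral_mono_set hf.2.1
  · exact Eventually.of_forall (fun x => by positivity)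
  · exact HasSubset.Subset.eventuallyLE (fun x hx => lt_trans ha hx.1)

lemma aux_phi_nonneg : ∀ r : ℝ, 0 < r → 0 ≤ auxphi f r := by
  intro r hr
  have := Real.sinh_pos_iff.mpr hr
  have := Real.cosh_pos (x := r)
  unfold auxphi; positivity

lemma aux_cont_gd (hf : H1rad f) : ContinuousOn (fun x => auxgd f x) (Ioi 0) := by
  unfold auxgd
  exact ((aux_contd hf).mul Real.continuous_sinh.continuousOn).add
    ((aux_contf hf).mul Real.continuous_cosh.continuousOn)

lemma aux_C0 (hf : H1rad f) {a b : ℝ} (ha : 0 < a) (hab : a ≤ b) :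
    (∫ x in a..b, auxgd f x^2) + (∫ x in a..b, (f x)^2 * Real.sinh x^2)
      - (∫ x in a..b, (deriv f x)^2 * Real.sinh x^2)
      = auxphi f b - auxphi f a := by
  have hsub : uIcc a b ⊆ Ioi 0 := by
    rw [uIcc_of_le hab]; exact fun x hx => lt_of_lt_of_le ha hx.1
  have c1 : ContinuousOn (fun x => auxgd f x^2) (Ioi 0) := (aux_cont_gd hf).pow 2
  have c2 : ContinuousOn (fun x => (f x)^2 * Real.sinh x^2) (Ioi 0) :=
    ((aux_contf hf).pow 2).mul (Real.continuous_sinh.continuousOn.pow 2)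
  have c3 : ContinuousOn (fun x => (deriv f x)^2 * Real.sinh x^2) (Ioi 0) :=
    ((aux_contd hf).pow 2).mul (Real.continuous_sinh.continuousOn.pow 2)
  have i1 := (c1.mono hsub).intervalIntegrable (μ := volume)
  have i2 := (c2.mono hsub).intervalIntegrable (μ := volume)
  have i3 := (c3.mono hsub).intervalIntegrable (μ := volume)
  have key : (∫ x in a..b, (auxgd f x^2 + (f x)^2 * Real.sinh x^2
      - (deriv f x)^2 * Real.sinh x^2)) = auxphi f b - auxphi f a := by
    apply intervalIntegral.integral_eq_sub_of_hasDerivAt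
    · intro x hx
      exact auxphi_hasDeriv hf x (hsub hx)
    · exact ((c1.add c2).sub c3).mono hsub |>.intervalIntegrable (μ := volume)
  rw [intervalIntegral.integral_sub (i1.add i2) i3, intervalIntegral.integral_add i1 i2] at key
  linarith [key]

lemma aux_cosh_le (x : ℝ) (hx : 1 ≤ x) : Real.cosh x ≤ 2 * Real.sinh x := by
  rw [Real.cosh_eq, Real.sinh_eq]
  have h1 : 2 ≤ Real.exp x := by
    have := Real.add_one_le_exp x; linarith
  have h2 : Real.exp (-x) ≤ 1/2 := by
    rw [Real.exp_neg]
    rw [inv_le_comm₀ (by linarith) (by norm_num)]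
    linarith
  linarith

lemma aux_exists_small (hf : H1rad f) {c : ℝ} (hc : 0 < c) (N : ℝ) :
    ∃ b : ℝ, N ≤ b ∧ 1 ≤ b ∧ auxphi f b ≤ c := by
  by_contra hcon
  push_neg at hcon
  set M := max N 1 with hM
  have hM1 : (1:ℝ) ≤ M := le_max_right _ _
  have hbig : ∀ x ∈ Ioi M, c / 2 ≤ f x ^ 2 * Real.sinh x ^ 2 := by
    intro x hx
    have hx1 : 1 ≤ x := le_trans hM1 (le_of_lt hx)
    have hphi := hcon x (le_trans (le_max_left _ _) (le_of_lt hx)) hx1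
    have hch := aux_cosh_le x hx1
    have hs : 0 < Real.sinh x := Real.sinh_pos_iff.mpr (by linarith)
    have : auxphi f x ≤ 2 * (f x ^ 2 * Real.sinh x ^ 2) := by
      unfold auxphi
      nlinarith [sq_nonneg (f x), mul_nonneg (sq_nonneg (f x)) hs.le]
    unfold auxphi at this hphi
    nlinarith
  have hint : IntegrableOn (fun x => f x ^ 2 * Real.sinh x ^ 2) (Ioi M) :=
    hf.2.2.mono_set (Ioi_subset_Ioi (by linarith))
  have hconst : IntegrableOn (fun _ : ℝ => c/2) (Ioi M) := by
    apply Integrable.mono' hint aestronglyMeasurable_const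
    filter_upwards [ae_restrict_mem measurableSet_Ioi] with x hx
    rw [Real.norm_of_nonneg (by positivity)]
    exact hbig x hx
  rw [integrableOn_const_iff] at hconst
  rcases hconst with h | h
  · simp at h; linarith
  · rw [Real.volume_Ioi] at h
    exact (lt_irrefl _ h).elim

lemma aux_C2 (hf : H1rad f) {a b : ℝ} (ha : 0 < a) (hab : a ≤ b) :
    (∫ x in Ioc a b, auxgd f x^2) ≤ auxK f ∧
    (∫ x in Ioc a b, (f x)^2 * Real.sinh x^2) ≤ auxK f := by
  have main : ∀ c : ℝ, 0 < c →
      (∫ x in Ioc a b, auxgd f x^2) ≤ auxK f + c ∧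
      (∫ x in Ioc a b, (f x)^2 * Real.sinh x^2) ≤ auxK f + c := by
    intro c hc
    obtain ⟨b', hbb', _, hphi⟩ := aux_exists_small hf hc b
    have hab' : a ≤ b' := le_trans hab hbb'
    have hsub : Icc a b' ⊆ Ioi 0 := fun x hx => lt_of_lt_of_le ha hx.1
    have c1 : ContinuousOn (fun x => auxgd f x^2) (Ioi 0) := (aux_cont_gd hf).pow 2
    have c2 : ContinuousOn (fun x => (f x)^2 * Real.sinh x^2) (Ioi 0) :=
      ((aux_contf hf).pow 2).mul (Real.continuous_sinh.continuousOn.pow 2)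
    have i1 : IntegrableOn (fun x => auxgd f x^2) (Ioc a b') :=
      ((c1.mono hsub).integrableOn_Icc).mono_set Ioc_subset_Icc_self
    have i2 : IntegrableOn (fun x => (f x)^2 * Real.sinh x^2) (Ioc a b') :=
      ((c2.mono hsub).integrableOn_Icc).mono_set Ioc_subset_Icc_self
    have hC0 := aux_C0 hf ha hab'
    rw [intervalIntegral.integral_of_le hab', intervalIntegral.integral_of_le hab',
      intervalIntegral.integral_of_le hab'] at hC0
    have hK := aux_Ksub hf (b := b') ha
    have hphia := aux_phi_nonneg (f := f) a ha
    have n1 : 0 ≤ ∫ x in Ioc a b', auxgd f x^2 :=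
      setIntegral_nonneg measurableSet_Ioc (fun x _ => by positivity)
    have n2 : 0 ≤ ∫ x in Ioc a b', (f x)^2 * Real.sinh x^2 :=
      setIntegral_nonneg measurableSet_Ioc (fun x _ => by positivity)
    have m1 : (∫ x in Ioc a b, auxgd f x^2) ≤ ∫ x in Ioc a b', auxgd f x^2 := by
      apply setIntegral_mono_set i1 (Eventually.of_forall (fun x => by positivity))
      exact HasSubset.Subset.eventuallyLE (Ioc_subset_Ioc le_rfl hbb')
    have m2 : (∫ x in Ioc a b, (f x)^2 * Real.sinh x^2)
        ≤ ∫ x in Ioc a b', (f x)^2 * Real.sinh x^2 := by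
      apply setIntegral_mono_set i2 (Eventually.of_forall (fun x => by positivity))
      exact HasSubset.Subset.eventuallyLE (Ioc_subset_Ioc le_rfl hbb')
    constructor
    · linarith
    · linarith
  constructor
  · refine le_of_forall_pos_le_add (fun c hc => ?_)
    linarith [(main c hc).1]
  · refine le_of_forall_pos_le_add (fun c hc => ?_)
    linarith [(main c hc).2]

lemma aux_phi_le (hf : H1rad f) {a b : ℝ} (ha : 0 < a) (hab : a ≤ b) :
    auxphi f a ≤ auxphi f b + auxK f := by
  have hC0 := aux_C0 hf ha hab
  rw [intervalIntegral.integral_of_le hab, intervalIntegral.integral_of_le hab,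
    intervalIntegral.integral_of_le hab] at hC0
  have n1 : 0 ≤ ∫ x in Ioc a b, auxgd f x^2 :=
    setIntegral_nonneg measurableSet_Ioc (fun x _ => by positivity)
  have n2 : 0 ≤ ∫ x in Ioc a b, (f x)^2 * Real.sinh x^2 :=
    setIntegral_nonneg measurableSet_Ioc (fun x _ => by positivity)
  have hK := aux_Ksub hf (b := b) ha
  linarith

lemma aux_g_sq_le_phi_mul (hf : H1rad f) {r : ℝ} (hr : 0 < r) :
    auxg f r ^ 2 ≤ auxphi f r * Real.sinh r := by
  have hs := Real.sinh_pos_iff.mpr hr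
  have hc := Real.cosh_pos (x := r)
  have h1 : (1:ℝ) ≤ Real.cosh r := Real.one_le_cosh r
  unfold auxg auxphi
  nlinarith [sq_nonneg (f r), mul_nonneg (mul_nonneg (sq_nonneg (f r)) hs.le) hs.le]

lemma aux_abs_le (t u : ℝ) (ht : 0 < t) : |u| ≤ t/2 * u^2 + 1/(2*t) := by
  have ht' : t * (1/(2*t)) = 1/2 := by field_simp
  rcases abs_cases u with ⟨h1, h2⟩ | ⟨h1, h2⟩ <;> rw [h1] <;>
    nlinarith [sq_nonneg (t*u - 1), sq_nonneg (t*u + 1)]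

lemma aux_C3 (hf : H1rad f) {r : ℝ} (hr : 0 < r) :
    auxg f r ^ 2 ≤ auxK f * r := by
  -- Step 1: ∀ t > 0, |auxg f r| ≤ t/2 * auxK f + r/(2t)
  have step1 : ∀ t : ℝ, 0 < t → |auxg f r| ≤ t/2 * auxK f + r/(2*t) := by
    intro t ht
    refine le_of_forall_pos_le_add (fun δ hδ => ?_)
    -- find small a
    have hten : Tendsto (fun a : ℝ => (auxphi f 1 + auxK f) * Real.sinh a)
        (nhdsWithin 0 (Ioi 0)) (nhds 0) := by
      have : Tendsto (fun a : ℝ => (auxphi f 1 + auxK f) * Real.sinh a)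
          (nhds 0) (nhds ((auxphi f 1 + auxK f) * Real.sinh 0)) :=
        (continuous_const.mul Real.continuous_sinh).continuousAt
      rw [Real.sinh_zero, mul_zero] at this
      exact this.mono_left nhdsWithin_le_nhds
    have hev1 : ∀ᶠ a in nhdsWithin 0 (Ioi 0),
        (auxphi f 1 + auxK f) * Real.sinh a < δ^2 :=
      hten.eventually_lt_const (by positivity)
    have hev2 : ∀ᶠ a in nhdsWithin (0:ℝ) (Ioi 0), a < min r 1 :=
      eventually_nhdsWithin_of_eventually_nhds
        (Filter.Tendsto.eventually_lt_const (by positivity) tendsto_id)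
    have hev3 : ∀ᶠ a in nhdsWithin (0:ℝ) (Ioi 0), a ∈ Ioi (0:ℝ) :=
      eventually_mem_nhdsWithin
    obtain ⟨a, h1, h2, ha⟩ := (hev1.and (hev2.and hev3)).exists
    have ha : (0:ℝ) < a := ha
    have har : a ≤ r := le_of_lt (lt_of_lt_of_le h2 (min_le_left _ _))
    have ha1 : a ≤ 1 := le_of_lt (lt_of_lt_of_le h2 (min_le_right _ _))
    -- |auxg f a| ≤ δ
    have hga : |auxg f a| ≤ δ := by
      have hb1 := aux_g_sq_le_phi_mul hf ha
      have hb2 := aux_phi_le hf ha ha1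
      have hs : 0 ≤ Real.sinh a := (Real.sinh_pos_iff.mpr ha).le
      have hphia : 0 ≤ auxphi f a := aux_phi_nonneg (f := f) a ha
      have : auxg f a ^ 2 ≤ (auxphi f 1 + auxK f) * Real.sinh a := by
        calc auxg f a ^ 2 ≤ auxphi f a * Real.sinh a := hb1
        _ ≤ (auxphi f 1 + auxK f) * Real.sinh a := by
            apply mul_le_mul_of_nonneg_right hb2 hs
      nlinarith [sq_abs (auxg f a), abs_nonneg (auxg f a)]
    -- FTC on [a, r]
    have hsub : uIcc a r ⊆ Ioi 0 := by
      rw [uIcc_of_le har]; exact fun x hx => lt_of_lt_of_le ha hx.1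
    have cgd : ContinuousOn (fun x => auxgd f x) (uIcc a r) := (aux_cont_gd hf).mono hsub
    have hftc : ∫ x in a..r, auxgd f x = auxg f r - auxg f a := by
      apply intervalIntegral.integral_eq_sub_of_hasDerivAt
      · intro x hx; exact auxg_hasDeriv hf x (hsub hx)
      · exact cgd.intervalIntegrable (μ := volume)
    -- |∫ gd| ≤ t/2 K + (r-a)/(2t)
    have hb : (∫ x in a..r, |auxgd f x|) ≤ t/2 * auxK f + r/(2*t) := by
      have hmono : (∫ x in a..r, |auxgd f x|)
          ≤ ∫ x in a..r, (t/2 * auxgd f x^2 + 1/(2*t)) := by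
        apply intervalIntegral.integral_mono_on har
        · exact (cgd.abs).intervalIntegrable (μ := volume)
        · exact ((continuousOn_const.mul (cgd.pow 2)).add continuousOn_const).intervalIntegrable (μ := volume)
        · intro x _; exact aux_abs_le t (auxgd f x) ht
      have hsplit : (∫ x in a..r, (t/2 * auxgd f x^2 + 1/(2*t)))
          = t/2 * (∫ x in a..r, auxgd f x^2) + (r - a)/(2*t) := by
        rw [intervalIntegral.integral_add (f := fun x => t/2 * auxgd f x^2) (g := fun _ => 1/(2*t)) ((continuousOn_const.mul (cgd.pow 2)).intervalIntegrable (μ := volume))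
          (intervalIntegrable_const), intervalIntegral.integral_const_mul,
          intervalIntegral.integral_const]
        simp only [smul_eq_mul]
        ring
      have hKb : (∫ x in a..r, auxgd f x^2) ≤ auxK f := by
        rw [intervalIntegral.integral_of_le har]
        exact (aux_C2 hf ha har).1
      have h4 : (r - a)/(2*t) ≤ r/(2*t) := by
        apply div_le_div_of_nonneg_right _ (by positivity)
        · linarith
      have h5 := mul_le_mul_of_nonneg_left hKb (by positivity : (0:ℝ) ≤ t/2)
      linarith
    have habs : |∫ x in a..r, auxgd f x| ≤ ∫ x in a..r, |auxgd f x| := by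
      have := intervalIntegral.norm_integral_le_integral_norm
        (f := fun x => auxgd f x) (μ := volume) har
      simpa using this
    have : |auxg f r| ≤ |auxg f a| + |∫ x in a..r, auxgd f x| := by
      have : auxg f r = auxg f a + ∫ x in a..r, auxgd f x := by linarith [hftc]
      rw [this]
      exact abs_add_le _ _
    linarith
  by_cases hK0 : auxK f = 0
  · have hg0 : auxg f r = 0 := by
      by_contra hne
      have habs : 0 < |auxg f r| := abs_pos.mpr hne
      have hst := step1 (r / |auxg f r|) (by positivity)
      rw [hK0] at hst
      have heq : r/(2*(r/|auxg f r|)) = |auxg f r|/2 := by field_simp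
      rw [heq] at hst
      linarith
    rw [hg0, hK0]
    simp [hr.le]
  · have hKpos : 0 < auxK f := lt_of_le_of_ne (aux_K_nonneg hf) (Ne.symm hK0)
    have hs1 : 0 < Real.sqrt r := Real.sqrt_pos.mpr hr
    have hs2 : 0 < Real.sqrt (auxK f) := Real.sqrt_pos.mpr hKpos
    have hs1sq : Real.sqrt r ^ 2 = r := Real.sq_sqrt hr.le
    have hs2sq : Real.sqrt (auxK f) ^ 2 = auxK f := Real.sq_sqrt hKpos.le
    have hst := step1 (Real.sqrt r / Real.sqrt (auxK f)) (by positivity)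
    have heq : (Real.sqrt r / Real.sqrt (auxK f))/2 * auxK f
        + r/(2*(Real.sqrt r / Real.sqrt (auxK f))) = Real.sqrt r * Real.sqrt (auxK f) := by
      rw [← hs1sq, ← hs2sq]
      field_simp
      rw [Real.sq_sqrt (sq_nonneg (Real.sqrt r)), Real.sq_sqrt (sq_nonneg (Real.sqrt (auxK f)))]
      ring
    rw [heq] at hst
    have hsq := pow_le_pow_left₀ (abs_nonneg _) hst 2
    rw [sq_abs, mul_pow, hs1sq, hs2sq] at hsq
    linarith

lemma aux_cont_g (hf : H1rad f) : ContinuousOn (auxg f) (Ioi 0) :=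
  (aux_contf hf).mul Real.continuous_sinh.continuousOn

lemma aux_C4 (hf : H1rad f) {a b : ℝ} (ha : 0 < a) (hab : a ≤ b) :
    (∫ x in Ioc a b, (auxg f x / x)^2) ≤ 6 * auxK f := by
  have hsub : uIcc a b ⊆ Ioi 0 := by
    rw [uIcc_of_le hab]; exact fun x hx => lt_of_lt_of_le ha hx.1
  have cg : ContinuousOn (auxg f) (uIcc a b) := (aux_cont_g hf).mono hsub
  have cgd : ContinuousOn (fun x => auxgd f x) (uIcc a b) := (aux_cont_gd hf).mono hsub
  have cv : ContinuousOn (fun x => auxg f x / x) (uIcc a b) :=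
    cg.div continuousOn_id (fun x hx => ne_of_gt (hsub hx))
  have iv2 : IntervalIntegrable (fun x => (auxg f x / x)^2) volume a b :=
    (cv.pow 2).intervalIntegrable (μ := volume)
  have iw2 : IntervalIntegrable (fun x => auxgd f x^2) volume a b :=
    (cgd.pow 2).intervalIntegrable (μ := volume)
  have iY : IntervalIntegrable (fun x => 2 * (auxg f x / x) * auxgd f x) volume a b :=
    ((continuousOn_const.mul cv).mul cgd).intervalIntegrable (μ := volume)
  -- FTC
  have hftc : (∫ x in a..b, ((auxg f x / x)^2 - 2 * (auxg f x / x) * auxgd f x))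
      = auxg f a^2/a - auxg f b^2/b := by
    have heq : ∀ x ∈ uIcc a b, HasDerivAt (fun x => -(auxg f x^2 / x))
        ((auxg f x / x)^2 - 2 * (auxg f x / x) * auxgd f x) x := by
      intro x hx
      have hxpos : 0 < x := hsub hx
      have hg2 : HasDerivAt (fun x => auxg f x^2) (2 * auxg f x ^ 1 * auxgd f x) x :=
        (auxg_hasDeriv hf x hxpos).pow 2
      have hdiv := (hg2.div (hasDerivAt_id x) hxpos.ne').neg
      refine hdiv.congr_deriv ?_
      simp only [id]
      field_simp
      ring
    have := intervalIntegral.integral_eq_sub_of_hasDerivAt heq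
      (((cv.pow 2).sub ((continuousOn_const.mul cv).mul cgd)).intervalIntegrable (μ := volume))
    rw [this]; ring
  rw [intervalIntegral.integral_sub iv2 iY] at hftc
  -- bound boundary terms
  have hba : auxg f a^2/a ≤ auxK f := by
    rw [div_le_iff₀ ha]
    exact aux_C3 hf ha
  have hbb : 0 ≤ auxg f b^2/b := div_nonneg (sq_nonneg _) (le_trans ha.le hab)
  -- bound Y
  have hY : (∫ x in a..b, 2 * (auxg f x / x) * auxgd f x)
      ≤ (1/2) * (∫ x in a..b, (auxg f x / x)^2) + 2 * (∫ x in a..b, auxgd f x^2) := by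
    have hmono : (∫ x in a..b, 2 * (auxg f x / x) * auxgd f x)
        ≤ ∫ x in a..b, ((1/2) * (auxg f x / x)^2 + 2 * auxgd f x^2) := by
      apply intervalIntegral.integral_mono_on hab iY
      · exact ((continuousOn_const.mul (cv.pow 2)).add
          (continuousOn_const.mul (cgd.pow 2))).intervalIntegrable (μ := volume)
      · intro x _
        nlinarith [sq_nonneg (auxg f x / x - 2 * auxgd f x)]
    rw [intervalIntegral.integral_add (f := fun x => (1/2) * (auxg f x / x)^2) (g := fun x => 2 * auxgd f x^2) ((continuousOn_const.mul (cv.pow 2)).intervalIntegrable (μ := volume))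
      ((continuousOn_const.mul (cgd.pow 2)).intervalIntegrable (μ := volume)),
      intervalIntegral.integral_const_mul, intervalIntegral.integral_const_mul] at hmono
    exact hmono
  have hKb : (∫ x in a..b, auxgd f x^2) ≤ auxK f := by
    rw [intervalIntegral.integral_of_le hab]
    exact (aux_C2 hf ha hab).1
  simp only [intervalIntegral.integral_of_le hab] at hftc hY hKb
  linarith

lemma aux_M_le_K (hf : H1rad f) :
    (∫ r in Ioi (0:ℝ), f r^2 * Real.sinh r^2) ≤ auxK f := by
  apply exhaust_bound hf.2.2
  intro a b ha
  rcases le_or_gt a b with hab | hab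
  · exact (aux_C2 hf ha hab).2
  · rw [Ioc_eq_empty (not_lt.mpr hab.le)]
    simpa using aux_K_nonneg hf

lemma aux_pointwise_P (hf : H1rad f) {x : ℝ} (hx : 0 < x) :
    f x^6 * Real.sinh x^2 ≤ auxK f^2 * (auxg f x / x)^2 := by
  have h1 : auxg f x^2 ≤ auxK f * x := aux_C3 hf hx
  have h2 : x ≤ Real.sinh x := Real.self_le_sinh_iff.mpr hx.le
  have hs : 0 < Real.sinh x := Real.sinh_pos_iff.mpr hx
  have hKnn : 0 ≤ auxK f := aux_K_nonneg hf
  have hfx : f x^2 * x ≤ auxK f := by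
    have h3 : (f x^2 * x) * x ≤ auxK f * x := by
      have hx2 : f x^2 * x^2 ≤ f x^2 * Real.sinh x^2 := by
        apply mul_le_mul_of_nonneg_left _ (sq_nonneg _)
        exact pow_le_pow_left₀ hx.le h2 2
      unfold auxg at h1
      nlinarith [h1, hx2]
    exact le_of_mul_le_mul_right h3 hx
  have hsq : (f x^2 * x)^2 ≤ auxK f^2 := pow_le_pow_left₀ (by positivity) hfx 2
  have hmul := mul_le_mul_of_nonneg_right hsq
    (by positivity : (0:ℝ) ≤ f x^2 * Real.sinh x^2)
  have key : f x^6 * Real.sinh x^2 * x^2 ≤ auxK f^2 * auxg f x^2 := by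
    calc f x^6 * Real.sinh x^2 * x^2 = (f x^2*x)^2 * (f x^2 * Real.sinh x^2) := by ring
    _ ≤ auxK f^2 * (f x^2 * Real.sinh x^2) := hmul
    _ = auxK f^2 * auxg f x^2 := by unfold auxg; ring
  rw [div_pow, ← mul_div_assoc, le_div_iff₀ (by positivity : (0:ℝ) < x^2)]
  exact key

lemma aux_Ioc_P (hf : H1rad f) {a b : ℝ} (ha : 0 < a) :
    (∫ x in Ioc a b, f x^6 * Real.sinh x^2) ≤ 6 * auxK f^3 := by
  have hKnn : 0 ≤ auxK f := aux_K_nonneg hf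
  rcases le_or_gt a b with hab | hab
  · have hsub : Icc a b ⊆ Ioi 0 := fun x hx => lt_of_lt_of_le ha hx.1
    have c6 : ContinuousOn (fun x => f x^6 * Real.sinh x^2) (Ioi 0) :=
      ((aux_contf hf).pow 6).mul (Real.continuous_sinh.continuousOn.pow 2)
    have cv : ContinuousOn (fun x => auxK f^2 * (auxg f x / x)^2) (Ioi 0) :=
      continuousOn_const.mul (((aux_cont_g hf).div continuousOn_id
        (fun x hx => ne_of_gt hx)).pow 2)
    have i1 : IntegrableOn (fun x => f x^6 * Real.sinh x^2) (Ioc a b) :=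
      ((c6.mono hsub).integrableOn_Icc).mono_set Ioc_subset_Icc_self
    have i2 : IntegrableOn (fun x => auxK f^2 * (auxg f x / x)^2) (Ioc a b) :=
      ((cv.mono hsub).integrableOn_Icc).mono_set Ioc_subset_Icc_self
    have hmono : (∫ x in Ioc a b, f x^6 * Real.sinh x^2)
        ≤ ∫ x in Ioc a b, auxK f^2 * (auxg f x / x)^2 := by
      apply setIntegral_mono_on i1 i2 measurableSet_Ioc
      intro x hx
      exact aux_pointwise_P hf (lt_of_lt_of_le ha hx.1.le)
    have hsplit : (∫ x in Ioc a b, auxK f^2 * (auxg f x / x)^2)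
        = auxK f^2 * ∫ x in Ioc a b, (auxg f x / x)^2 := by
      exact integral_const_mul _ _
    have hC4 := aux_C4 hf ha hab
    have := mul_le_mul_of_nonneg_left hC4 (by positivity : (0:ℝ) ≤ auxK f^2)
    calc (∫ x in Ioc a b, f x^6 * Real.sinh x^2)
        ≤ auxK f^2 * ∫ x in Ioc a b, (auxg f x / x)^2 := by rw [← hsplit]; exact hmono
    _ ≤ auxK f^2 * (6 * auxK f) := this
    _ = 6 * auxK f^3 := by ring
  · rw [Ioc_eq_empty (not_lt.mpr hab.le)]
    simp only [Measure.restrict_empty, integral_zero_measure]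
    positivity

lemma aux_P_bound (hf : H1rad f) :
    IntegrableOn (fun r => f r^6 * Real.sinh r^2) (Ioi (0:ℝ)) ∧
    (∫ r in Ioi (0:ℝ), f r^6 * Real.sinh r^2) ≤ 6 * auxK f^3 := by
  have hcont : ContinuousOn (fun x => f x^6 * Real.sinh x^2) (Ioi 0) :=
    ((aux_contf hf).pow 6).mul (Real.continuous_sinh.continuousOn.pow 2)
  have hint : IntegrableOn (fun r => f r^6 * Real.sinh r^2) (Ioi (0:ℝ)) :=
    exhaust_integrable hcont (fun x _ => by positivity)
      (fun a b ha => aux_Ioc_P hf ha)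
  exact ⟨hint, exhaust_bound hint (fun a b ha => aux_Ioc_P hf ha)⟩

lemma aux_M_pos (hf : H1rad f) (hnz : ∃ r > 0, f r ≠ 0) :
    0 < ∫ r in Ioi (0:ℝ), f r^2 * Real.sinh r^2 := by
  obtain ⟨r₀, hr₀, hfr₀⟩ := hnz
  rw [setIntegral_pos_iff_support_of_nonneg_ae
    (Eventually.of_forall (fun x => by positivity)) hf.2.2]
  have hcont : ContinuousAt f r₀ :=
    (aux_contf hf).continuousAt (Ioi_mem_nhds hr₀)
  have hev : ∀ᶠ x in nhds r₀, f x ≠ 0 ∧ x ∈ Ioi (0:ℝ) :=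
    (hcont.eventually_ne hfr₀).and (Ioi_mem_nhds hr₀)
  obtain ⟨ε, hε, hball⟩ := Metric.eventually_nhds_iff.mp hev
  have hsub : Metric.ball r₀ ε ⊆
      (Function.support fun r => f r^2 * Real.sinh r^2) ∩ Ioi 0 := by
    intro y hy
    obtain ⟨h1, h2⟩ := hball (Metric.mem_ball.mp hy)
    refine ⟨?_, h2⟩
    have hs : Real.sinh y ≠ 0 := (Real.sinh_pos_iff.mpr h2).ne'
    simp only [Function.mem_support]
    positivity
  exact lt_of_lt_of_le (Metric.measure_ball_pos volume r₀ hε) (measure_mono hsub)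
/-- Small functions have functional value near `1/2`. -/
theorem small_data_J_near_half :
    ∀ σ > (0 : ℝ), ∃ ε > (0 : ℝ), ∀ f : ℝ → ℝ, H1rad f →
      (∃ r > 0, f r ≠ 0) → H1norm f ≤ ε → Jh f ≥ 1 / 2 - σ := by
  intro σ hσ
  set σ' := min σ (1/4) with hσ'def
  have hσ'pos : 0 < σ' := lt_min hσ (by norm_num)
  have hσ'le : σ' ≤ σ := min_le_left _ _
  have hσ'lt : σ' ≤ 1/4 := min_le_right _ _
  have hπ := Real.pi_pos
  refine ⟨Real.sqrt (4*Real.pi*Real.sqrt σ'), Real.sqrt_pos.mpr (by positivity), ?_⟩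
  intro f hf hnz hnorm
  have hK0nn : 0 ≤ auxK f := aux_K_nonneg hf
  have hBK : (∫ r in Ioi (0:ℝ), f r^2 * Real.sinh r^2) ≤ auxK f := aux_M_le_K hf
  have hBpos : 0 < ∫ r in Ioi (0:ℝ), f r^2 * Real.sinh r^2 := aux_M_pos hf hnz
  have hQ := (aux_P_bound hf).2
  set K0 := auxK f with hK0def
  set B := ∫ r in Ioi (0:ℝ), f r^2 * Real.sinh r^2 with hBdef
  set Q := ∫ r in Ioi (0:ℝ), f r^6 * Real.sinh r^2 with hQdef
  have hQnn : 0 ≤ Q :=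
    setIntegral_nonneg measurableSet_Ioi (fun x _ => by positivity)
  have hKh : Kh f = 4*Real.pi*K0 := rfl
  have hMh : Mh f = 4*Real.pi*B := rfl
  have hPh : Ph f = 4*Real.pi*Q := rfl
  have hsumnn : 0 ≤ Kh f + Mh f := by
    rw [hKh, hMh]
    nlinarith [mul_nonneg hπ.le hK0nn, mul_nonneg hπ.le hBpos.le]
  have hsq : Kh f + Mh f ≤ 4*Real.pi*Real.sqrt σ' := by
    have h1 : Kh f + Mh f = (H1norm f)^2 := (Real.sq_sqrt hsumnn).symm
    have h2 : (H1norm f)^2 ≤ (Real.sqrt (4*Real.pi*Real.sqrt σ'))^2 :=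
      pow_le_pow_left₀ (Real.sqrt_nonneg _) hnorm 2
    rw [Real.sq_sqrt (by positivity)] at h2
    linarith
  have hK0le : K0 ≤ Real.sqrt σ' := by
    rw [hKh, hMh] at hsq
    nlinarith [mul_nonneg hπ.le hBpos.le, hπ]
  have hK2 : K0^2 ≤ σ' := by
    have hs := Real.sq_sqrt hσ'pos.le
    nlinarith [Real.sqrt_nonneg σ']
  have core : (1/2 - σ)*B ≤ K0/2 - K0^3 := by
    nlinarith [mul_nonneg (sub_nonneg.mpr hBK) (by linarith : (0:ℝ) ≤ 1/2 - σ'),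
      mul_nonneg hK0nn (sub_nonneg.mpr hK2),
      mul_nonneg hBpos.le (sub_nonneg.mpr hσ'le)]
  have hMpos : 0 < Mh f := by
    rw [hMh]
    positivity
  rw [ge_iff_le, Jh, le_div_iff₀ hMpos, Eh]
  have hPh6 : Ph f / 6 ≤ 4*Real.pi*K0^3 := by
    rw [hPh]
    nlinarith [mul_le_mul_of_nonneg_left hQ (le_of_lt hπ)]
  have hcore4 : (1/2 - σ)*(4*Real.pi*B) ≤ 4*Real.pi*(K0/2 - K0^3) := by
    nlinarith [mul_le_mul_of_nonneg_left core (by positivity : (0:ℝ) ≤ 4*Real.pi)]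
  rw [hMh, hKh]
  linarith [hcore4, hPh6]
end

section
/- (Decoupling decomposition away from the origin.) Let R > 0, let (R_k) be a sequence of positive reals with R_k → ∞, let ε > 0, and let (f_k) be a sequence in H¹_rad(H³) with sup_k ‖f_k‖_{H¹} < ∞. Then there exist a strictly increasing map k : ℕ → ℕ, functions g_n, h_n, r_n ∈ H¹_rad(H³), and a sequence R̃_n → ∞ such that f_{k(n)} = g_n + h_n + r_n for all n, and for all sufficiently large n: g_n(r) = f_{k(n)}(r) for all r ≤ R; h_n(r) = f_{k(n)}(r) for all r ≥ R_{k(n)}; g_n and h_n have disjoint supports; h_n(r) = 0 for all r ≤ R̃_n; and ‖r_n‖_{H¹} ≤ ε. -/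
open MeasureTheory Set Filter

private lemma st_deriv_zero_of_neg {t : ℝ} (h : t < 0) : deriv Real.smoothTransition t = 0 := by
  have he : Real.smoothTransition =ᶠ[nhds t] (fun _ => (0:ℝ)) :=
    Filter.eventuallyEq_of_mem (Iio_mem_nhds h) fun y hy =>
      Real.smoothTransition.zero_of_nonpos (le_of_lt hy)
  rw [he.deriv_eq, deriv_const]

private lemma st_deriv_zero_of_gt {t : ℝ} (h : 1 < t) : deriv Real.smoothTransition t = 0 := by
  have he : Real.smoothTransition =ᶠ[nhds t] (fun _ => (1:ℝ)) :=
    Filter.eventuallyEq_of_mem (Ioi_mem_nhds h) fun y hy =>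
      Real.smoothTransition.one_of_one_le (le_of_lt hy)
  rw [he.deriv_eq, deriv_const]

private lemma st_deriv_bound : ∃ c : ℝ, 0 ≤ c ∧ ∀ t, |deriv Real.smoothTransition t| ≤ c := by
  obtain ⟨c0, hc0⟩ := (isCompact_Icc (a := (-1:ℝ)) (b := 2)).exists_bound_of_continuousOn
    (((Real.smoothTransition.contDiff (n := 1)).continuous_deriv le_rfl).continuousOn)
  refine ⟨max c0 0, le_max_right _ _, fun t => ?_⟩
  rcases lt_or_ge t (-1) with h | h
  · rw [st_deriv_zero_of_neg (by linarith)]; simp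
  rcases le_or_gt t 2 with h2 | h2
  · exact le_trans (by simpa using hc0 t ⟨h, h2⟩) (le_max_left _ _)
  · rw [st_deriv_zero_of_gt (by linarith)]; simp

private lemma hasDerivAt_st_shift (b x : ℝ) :
    HasDerivAt (fun y => Real.smoothTransition (y - b)) (deriv Real.smoothTransition (x - b)) x := by
  have h1 : HasDerivAt (fun y : ℝ => y - b) 1 x := (hasDerivAt_id x).sub_const b
  have h2 : HasDerivAt Real.smoothTransition (deriv Real.smoothTransition (x - b)) (x - b) :=
    (((Real.smoothTransition.contDiff (n := 1)).differentiable (by simp)) (x - b)).hasDerivAt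
  have h3 := h2.comp x h1; rw [mul_one] at h3; exact h3

private lemma H1rad_mul {f : ℝ → ℝ} (hf : H1rad f) (φ : ℝ → ℝ) (hφ : ContDiff ℝ 1 φ)
    (hφ1 : ∀ x, |φ x| ≤ 1) {c : ℝ} (hc : ∀ x, |deriv φ x| ≤ c) :
    H1rad (fun x => φ x * f x) := by
  have hcd : ContDiffOn ℝ 1 (fun x => φ x * f x) (Ioi 0) := (hφ.contDiffOn).mul hf.1
  have hdf : ∀ x ∈ Ioi (0:ℝ), DifferentiableAt ℝ f x := fun x hx =>
    (hf.1.contDiffAt (Ioi_mem_nhds hx)).differentiableAt one_ne_zero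
  have hder : ∀ x ∈ Ioi (0:ℝ),
      deriv (fun y => φ y * f y) x = deriv φ x * f x + φ x * deriv f x := fun x hx =>
    deriv_mul ((hφ.differentiable one_ne_zero) x) (hdf x hx)
  have hφsq : ∀ x, (φ x)^2 ≤ 1 := by
    intro x
    have h := abs_le.1 (hφ1 x)
    nlinarith [h.1, h.2]
  have hcsq : ∀ x, (deriv φ x)^2 ≤ c^2 := by
    intro x
    have h := abs_le.1 (hc x)
    exact sq_le_sq' h.1 h.2
  refine ⟨hcd, ?_, ?_⟩
  · have hmeas : AEStronglyMeasurable
        (fun r => (deriv (fun y => φ y * f y) r)^2 * Real.sinh r^2) (volume.restrict (Ioi 0)) :=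
      (((hcd.continuousOn_deriv_of_isOpen isOpen_Ioi le_rfl).pow 2).mul
        ((Real.continuous_sinh.continuousOn).pow 2)).aestronglyMeasurable measurableSet_Ioi
    have hG : Integrable (fun r => 2*c^2 * (f r^2 * Real.sinh r^2)
        + 2 * ((deriv f r)^2 * Real.sinh r^2)) (volume.restrict (Ioi 0)) :=
      (hf.2.2.const_mul _).add (hf.2.1.const_mul _)
    refine hG.mono' hmeas ?_
    refine ae_restrict_of_forall_mem measurableSet_Ioi fun x hx => ?_
    rw [Real.norm_eq_abs, abs_of_nonneg (by positivity), hder x hx]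
    have e1 : (deriv φ x * f x + φ x * deriv f x)^2 ≤ 2*c^2*(f x)^2 + 2*(deriv f x)^2 := by
      nlinarith [sq_nonneg (deriv φ x * f x - φ x * deriv f x),
        mul_le_mul_of_nonneg_right (hcsq x) (sq_nonneg (f x)),
        mul_le_mul_of_nonneg_right (hφsq x) (sq_nonneg (deriv f x))]
    calc (deriv φ x * f x + φ x * deriv f x)^2 * Real.sinh x^2
        ≤ (2*c^2*(f x)^2 + 2*(deriv f x)^2) * Real.sinh x^2 :=
          mul_le_mul_of_nonneg_right e1 (sq_nonneg _)
      _ = 2*c^2 * (f x^2 * Real.sinh x^2) + 2 * ((deriv f x)^2 * Real.sinh x^2) := by ring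
  · have hmeas : AEStronglyMeasurable
        (fun r => ((fun y => φ y * f y) r)^2 * Real.sinh r^2) (volume.restrict (Ioi 0)) :=
      ((hcd.continuousOn.pow 2).mul
        ((Real.continuous_sinh.continuousOn).pow 2)).aestronglyMeasurable measurableSet_Ioi
    refine hf.2.2.mono' hmeas ?_
    refine ae_restrict_of_forall_mem measurableSet_Ioi fun x hx => ?_
    rw [Real.norm_eq_abs, abs_of_nonneg (by positivity)]
    calc (φ x * f x)^2 * Real.sinh x^2 = (φ x)^2 * (f x^2 * Real.sinh x^2) := by ring
      _ ≤ 1 * (f x^2 * Real.sinh x^2) := mul_le_mul_of_nonneg_right (hφsq x) (by positivity)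
      _ = f x^2 * Real.sinh x^2 := one_mul _


private lemma KhMh_eq {f : ℝ → ℝ}
    (h1 : IntegrableOn (fun r => (deriv f r)^2 * Real.sinh r^2) (Ioi 0))
    (h2 : IntegrableOn (fun r => f r^2 * Real.sinh r^2) (Ioi 0)) :
    Kh f + Mh f = 4 * Real.pi * ∫ r in Ioi (0:ℝ), ((deriv f r)^2 + f r^2) * Real.sinh r^2 := by
  have heq : ∫ r in Ioi (0:ℝ), ((deriv f r)^2 + f r^2) * Real.sinh r^2
      = (∫ r in Ioi (0:ℝ), (deriv f r)^2 * Real.sinh r^2)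
        + ∫ r in Ioi (0:ℝ), f r^2 * Real.sinh r^2 := by
    rw [← integral_add h1 h2]
    apply integral_congr_ae
    filter_upwards with r
    ring
  rw [Kh, Mh, heq]; ring

private lemma pigeonhole {N : ℕ} (hN : 0 < N) (S : ℕ → ℝ) {B : ℝ}
    (hsum : ∑ j ∈ Finset.range N, S j ≤ B) : ∃ j < N, S j ≤ B / N := by
  by_contra hcon
  push_neg at hcon
  have h1 : ∑ j ∈ Finset.range N, (B / N) < ∑ j ∈ Finset.range N, S j :=
    Finset.sum_lt_sum_of_nonempty (Finset.nonempty_range_iff.2 hN.ne')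
      fun j hj => hcon j (Finset.mem_range.1 hj)
  rw [Finset.sum_const, Finset.card_range, nsmul_eq_mul] at h1
  have hN' : (0:ℝ) < N := by exact_mod_cast hN
  have h2 : (N:ℝ) * (B / N) = B := by field_simp
  linarith

private lemma remainder_est {F : ℝ → ℝ} (hF : H1rad F) {b : ℝ} (hb : 0 < b)
    {Cst : ℝ} (hCst0 : 0 ≤ Cst) (hCst : ∀ t, |deriv Real.smoothTransition t| ≤ Cst)
    (hrr : H1rad (fun x => (Real.smoothTransition (x - b) - Real.smoothTransition (x - (b+1))) * F x)) :
    Kh (fun x => (Real.smoothTransition (x - b) - Real.smoothTransition (x - (b+1))) * F x)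
      + Mh (fun x => (Real.smoothTransition (x - b) - Real.smoothTransition (x - (b+1))) * F x)
      ≤ (8*Cst^2 + 3) * (4 * Real.pi * ∫ r in Ioc b (b+2), ((deriv F r)^2 + F r^2) * Real.sinh r^2) := by
  set rr : ℝ → ℝ :=
    fun x => (Real.smoothTransition (x - b) - Real.smoothTransition (x - (b+1))) * F x with hrrdef
  set w : ℝ → ℝ := fun r => ((deriv F r)^2 + F r^2) * Real.sinh r^2 with hwdef
  set q : ℝ → ℝ := fun r => ((deriv rr r)^2 + rr r^2) * Real.sinh r^2 with hqdef
  have hw : IntegrableOn w (Ioi 0) :=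
    (hF.2.1.add hF.2.2).congr (ae_of_all _ fun r => by simp [hwdef]; ring)
  have hq_int : IntegrableOn q (Ioi 0) :=
    (hrr.2.1.add hrr.2.2).congr (ae_of_all _ fun r => by simp [hqdef]; ring)
  set Mc : ℝ := 8*Cst^2 + 3 with hMcdef
  have hMc0 : (0:ℝ) ≤ Mc := by positivity
  have hind_int : Integrable ((Ioc b (b+2)).indicator (fun r => Mc * w r))
      (volume.restrict (Ioi 0)) := (hw.const_mul Mc).indicator measurableSet_Ioc
  -- pointwise a.e. bound
  have hae : ∀ᵐ x ∂(volume.restrict (Ioi (0:ℝ))),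
      q x ≤ (Ioc b (b+2)).indicator (fun r => Mc * w r) x := by
    have hne : ∀ᵐ x ∂(volume.restrict (Ioi (0:ℝ))), x ≠ b := by
      refine ae_restrict_of_ae ?_
      have : volume ({b} : Set ℝ) = 0 := measure_singleton b
      exact compl_mem_ae_iff.2 this
    filter_upwards [ae_restrict_mem measurableSet_Ioi, hne] with x hx hxb
    by_cases hmem : x ∈ Ioc b (b+2)
    · rw [indicator_of_mem hmem]
      -- derivative formula
      have hdθ : HasDerivAt (fun y => Real.smoothTransition (y - b) - Real.smoothTransition (y - (b+1)))
          (deriv Real.smoothTransition (x - b) - deriv Real.smoothTransition (x - (b+1))) x :=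
        (hasDerivAt_st_shift b x).sub (hasDerivAt_st_shift (b+1) x)
      have hdF : DifferentiableAt ℝ F x :=
        (hF.1.contDiffAt (Ioi_mem_nhds hx)).differentiableAt one_ne_zero
      have hd : deriv rr x
          = (deriv Real.smoothTransition (x - b) - deriv Real.smoothTransition (x - (b+1))) * F x
            + (Real.smoothTransition (x - b) - Real.smoothTransition (x - (b+1))) * deriv F x :=
        ((hdθ.mul hdF.hasDerivAt)).deriv
      set θ := Real.smoothTransition (x - b) - Real.smoothTransition (x - (b+1)) with hθ
      set θ' := deriv Real.smoothTransition (x - b) - deriv Real.smoothTransition (x - (b+1)) with hθ'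
      have hθ1 : θ^2 ≤ 1 := by
        have h1 := Real.smoothTransition.nonneg (x - b)
        have h2 := Real.smoothTransition.le_one (x - b)
        have h3 := Real.smoothTransition.nonneg (x - (b+1))
        have h4 := Real.smoothTransition.le_one (x - (b+1))
        nlinarith
      have hθ'2 : θ'^2 ≤ 4*Cst^2 := by
        have h1 := abs_le.1 (hCst (x - b))
        have h2 := abs_le.1 (hCst (x - (b+1)))
        nlinarith [h1.1, h1.2, h2.1, h2.2]
      have e1 : (θ' * F x + θ * deriv F x)^2 + (θ * F x)^2 ≤ Mc * ((deriv F x)^2 + (F x)^2) := by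
        nlinarith [sq_nonneg (θ' * F x - θ * deriv F x),
          mul_le_mul_of_nonneg_right hθ'2 (sq_nonneg (F x)),
          mul_le_mul_of_nonneg_right hθ1 (sq_nonneg (deriv F x)),
          mul_le_mul_of_nonneg_right hθ1 (sq_nonneg (F x)),
          sq_nonneg (Cst * deriv F x), sq_nonneg (Cst * F x)]
      have hrrx : rr x = θ * F x := rfl
      calc q x = ((θ' * F x + θ * deriv F x)^2 + (θ * F x)^2) * Real.sinh x^2 := by
            rw [hqdef]; simp only []; rw [hd, hrrx]
        _ ≤ (Mc * ((deriv F x)^2 + (F x)^2)) * Real.sinh x^2 :=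
            mul_le_mul_of_nonneg_right e1 (sq_nonneg _)
        _ = Mc * w x := by rw [hwdef]; ring
    · rw [indicator_of_notMem hmem]
      have hcases : x < b ∨ b + 2 < x := by
        rcases le_or_gt x b with h | h
        · exact Or.inl (lt_of_le_of_ne h hxb)
        · right
          by_contra hc
          push_neg at hc
          exact hmem ⟨h, hc⟩
      have hz : rr =ᶠ[nhds x] (fun _ => (0:ℝ)) := by
        rcases hcases with h | h
        · refine Filter.eventuallyEq_of_mem (Iio_mem_nhds h) fun y hy => ?_
          have hy' : y < b := hy
          simp only [hrrdef]
          rw [Real.smoothTransition.zero_of_nonpos (by linarith),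
            Real.smoothTransition.zero_of_nonpos (by linarith)]
          ring
        · refine Filter.eventuallyEq_of_mem (Ioi_mem_nhds h) fun y hy => ?_
          have hy' : b + 2 < y := hy
          simp only [hrrdef]
          rw [Real.smoothTransition.one_of_one_le (by linarith),
            Real.smoothTransition.one_of_one_le (by linarith)]
          ring
      have h1 : deriv rr x = 0 := by rw [hz.deriv_eq, deriv_const]
      have h2 : rr x = 0 := hz.eq_of_nhds
      simp [hqdef, h1, h2]
  have hint_le : ∫ x in Ioi (0:ℝ), q x
      ≤ ∫ x in Ioi (0:ℝ), (Ioc b (b+2)).indicator (fun r => Mc * w r) x :=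
    integral_mono_ae hq_int hind_int hae
  have hind_eq : ∫ x in Ioi (0:ℝ), (Ioc b (b+2)).indicator (fun r => Mc * w r) x
      = Mc * ∫ r in Ioc b (b+2), w r := by
    rw [setIntegral_indicator measurableSet_Ioc]
    have hsub : Ioi (0:ℝ) ∩ Ioc b (b+2) = Ioc b (b+2) :=
      inter_eq_self_of_subset_right (fun y hy => lt_trans hb hy.1)
    rw [hsub, integral_const_mul]
  have hKM : Kh rr + Mh rr = 4 * Real.pi * ∫ x in Ioi (0:ℝ), q x := KhMh_eq hrr.2.1 hrr.2.2
  rw [hKM]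
  have hπ : (0:ℝ) < 4 * Real.pi := by positivity
  calc 4 * Real.pi * ∫ x in Ioi (0:ℝ), q x
      ≤ 4 * Real.pi * (Mc * ∫ r in Ioc b (b+2), w r) := by
        rw [← hind_eq]
        exact mul_le_mul_of_nonneg_left hint_le hπ.le
    _ = Mc * (4 * Real.pi * ∫ r in Ioc b (b+2), w r) := by ring

/-- Decoupling decomposition away from the origin. -/
theorem decoupling_decomposition_far (R : ℝ) (hR : 0 < R)
    (Rk : ℕ → ℝ) (hRkpos : ∀ k, 0 < Rk k) (hRk : Tendsto Rk atTop atTop)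
    (ε : ℝ) (hε : 0 < ε)
    (f : ℕ → ℝ → ℝ) (hf : ∀ k, H1rad (f k))
    (hbdd : ∃ C : ℝ, ∀ k, H1norm (f k) ≤ C) :
    ∃ k : ℕ → ℕ, StrictMono k ∧
    ∃ g h rr : ℕ → ℝ → ℝ, ∃ Rt : ℕ → ℝ,
      Tendsto Rt atTop atTop ∧
      (∀ n, H1rad (g n) ∧ H1rad (h n) ∧ H1rad (rr n)) ∧
      (∀ n, ∀ x, f (k n) x = g n x + h n x + rr n x) ∧
      (∀ᶠ n in atTop,
        (∀ x : ℝ, 0 < x → x ≤ R → g n x = f (k n) x) ∧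
        (∀ x : ℝ, Rk (k n) ≤ x → h n x = f (k n) x) ∧
        (∀ x : ℝ, g n x = 0 ∨ h n x = 0) ∧
        (∀ x : ℝ, 0 < x → x ≤ Rt n → h n x = 0) ∧
        H1norm (rr n) ≤ ε) := by
  classical
  obtain ⟨C, hC⟩ := hbdd
  have hC0 : 0 ≤ C := le_trans (Real.sqrt_nonneg _) (hC 0)
  obtain ⟨Cst, hCst0, hCst⟩ := st_deriv_bound
  have hMcpos : (0:ℝ) < 8*Cst^2 + 3 := by positivity
  obtain ⟨N0, hN0⟩ := exists_nat_ge ((8*Cst^2+3) * C^2 / ε^2)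
  set N : ℕ := max N0 1 with hNdef
  have hN1 : 1 ≤ N := le_max_right _ _
  have hNpos : (0:ℝ) < N := by
    have : 0 < N := Nat.lt_of_lt_of_le Nat.zero_lt_one hN1
    exact_mod_cast this
  have hNbound : (8*Cst^2+3) * C^2 ≤ N * ε^2 := by
    have h1 : (8*Cst^2+3) * C^2 / ε^2 ≤ (N:ℝ) := by
      refine le_trans hN0 ?_
      exact_mod_cast le_max_left N0 1
    have h2 : (8*Cst^2+3) * C^2 = ((8*Cst^2+3) * C^2 / ε^2) * ε^2 := by field_simp
    rw [h2]
    exact mul_le_mul_of_nonneg_right h1 (sq_nonneg ε)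
  obtain ⟨k, hkmono, hkP⟩ := Filter.extraction_forall_of_eventually
    (P := fun n j => max R (n:ℝ) + 2*N + 2 ≤ Rk j)
    (fun n => hRk.eventually_ge_atTop _)
  have hKMle : ∀ m : ℕ,
      4 * Real.pi * ∫ r in Ioi (0:ℝ), ((deriv (f m) r)^2 + f m r^2) * Real.sinh r^2 ≤ C^2 := by
    intro m
    rw [← KhMh_eq (hf m).2.1 (hf m).2.2]
    have hnn : 0 ≤ Kh (f m) + Mh (f m) := by
      rw [KhMh_eq (hf m).2.1 (hf m).2.2]
      have h0 : 0 ≤ ∫ r in Ioi (0:ℝ), ((deriv (f m) r)^2 + f m r^2) * Real.sinh r^2 :=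
        setIntegral_nonneg measurableSet_Ioi (fun r _ => by positivity)
      exact mul_nonneg (by positivity) h0
    calc Kh (f m) + Mh (f m) = Real.sqrt (Kh (f m) + Mh (f m))^2 := (Real.sq_sqrt hnn).symm
      _ ≤ C^2 := pow_le_pow_left₀ (Real.sqrt_nonneg _) (hC m) 2
  have key : ∀ n : ℕ, ∃ bn : ℝ, max R (n:ℝ) ≤ bn ∧ bn + 2 ≤ max R (n:ℝ) + 2*N ∧
      4 * Real.pi * ∫ r in Ioc bn (bn+2),
        ((deriv (f (k n)) r)^2 + f (k n) r^2) * Real.sinh r^2 ≤ C^2 / N := by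
    intro n
    have hw : IntegrableOn
        (fun r => ((deriv (f (k n)) r)^2 + f (k n) r^2) * Real.sinh r^2) (Ioi 0) :=
      ((hf (k n)).2.1.add (hf (k n)).2.2).congr (ae_of_all _ fun r => by simp only [Pi.add_apply]; ring)
    set w : ℝ → ℝ := fun r => ((deriv (f (k n)) r)^2 + f (k n) r^2) * Real.sinh r^2 with hwdef
    set a0 : ℝ := max R (n:ℝ) with ha0
    have ha0pos : 0 < a0 := lt_of_lt_of_le hR (le_max_left _ _)
    set aS : ℕ → ℝ := fun j => a0 + 2*j with haS
    have hstep : ∀ j : ℕ, aS (j+1) = aS j + 2 := by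
      intro j; simp only [haS]; push_cast; ring
    have hmono' : ∀ j : ℕ, aS j ≤ aS (j+1) := fun j => by rw [hstep]; linarith
    have hpos : ∀ j : ℕ, 0 < aS j := fun j => by
      have h2j : (0:ℝ) ≤ 2*(j:ℝ) := by positivity
      simp only [haS]; linarith
    have hii : ∀ j < N, IntervalIntegrable w volume (aS j) (aS (j+1)) := by
      intro j _
      rw [intervalIntegrable_iff, uIoc_of_le (hmono' j)]
      exact hw.mono_set fun y hy => lt_trans (hpos j) hy.1
    have hsum := intervalIntegral.sum_integral_adjacent_intervals (a := aS) (μ := volume)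
      (f := w) hii
    have hπ : (0:ℝ) < 4*Real.pi := by positivity
    have htail : ∫ x in (aS 0)..(aS N), w x ≤ C^2/(4*Real.pi) := by
      rw [intervalIntegral.integral_of_le]
      · have hsub : Ioc (aS 0) (aS N) ⊆ Ioi 0 := fun y hy => lt_trans (hpos 0) hy.1
        have hm := setIntegral_mono_set hw
          (ae_of_all _ fun r => by positivity)
          (HasSubset.Subset.eventuallyLE hsub)
        have hle := hKMle (k n)
        rw [le_div_iff₀ hπ]
        calc (∫ x in Ioc (aS 0) (aS N), w x) * (4*Real.pi)
            ≤ (∫ x in Ioi (0:ℝ), w x) * (4*Real.pi) := mul_le_mul_of_nonneg_right hm hπ.le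
          _ = 4 * Real.pi * ∫ x in Ioi (0:ℝ), w x := by ring
          _ ≤ C^2 := hle
      · have h2N : (0:ℝ) ≤ 2*(N:ℝ) := by positivity
        simp only [haS]
        push_cast
        linarith
    obtain ⟨j, hjN, hj⟩ := pigeonhole (Nat.lt_of_lt_of_le Nat.zero_lt_one hN1)
      (fun j => ∫ x in (aS j)..(aS (j+1)), w x) (hsum.le.trans htail)
    refine ⟨aS j, ?_, ?_, ?_⟩
    · have h2j : (0:ℝ) ≤ 2*(j:ℝ) := by positivity
      simp only [haS]; linarith
    · have hjN' : (j:ℝ) + 1 ≤ (N:ℝ) := by exact_mod_cast hjN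
      simp only [haS]; linarith
    · rw [intervalIntegral.integral_of_le (hmono' j), hstep j] at hj
      have heq : 4*Real.pi*((C^2/(4*Real.pi))/N) = C^2/N := by
        field_simp
      calc 4*Real.pi * ∫ r in Ioc (aS j) (aS j + 2), w r
          ≤ 4*Real.pi*((C^2/(4*Real.pi))/N) := mul_le_mul_of_nonneg_left hj hπ.le
        _ = C^2/N := heq
  choose b hb1 hb2 hb3 using key
  have hbR : ∀ n : ℕ, R ≤ b n := fun n => le_trans (le_max_left _ _) (hb1 n)
  have hbn : ∀ n : ℕ, (n:ℝ) ≤ b n := fun n => le_trans (le_max_right _ _) (hb1 n)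
  have hb0 : ∀ n : ℕ, 0 < b n := fun n => lt_of_lt_of_le hR (hbR n)
  have hbRk : ∀ n : ℕ, b n + 2 ≤ Rk (k n) := fun n => by
    have h1 := hb2 n; have h2 := hkP n; linarith
  have hstC : ∀ (c : ℝ), ContDiff ℝ 1 (fun x : ℝ => Real.smoothTransition (x - c)) := fun c =>
    Real.smoothTransition.contDiff.comp (contDiff_id.sub contDiff_const)
  have hgrad : ∀ n, H1rad (fun x => (1 - Real.smoothTransition (x - b n)) * f (k n) x) := by
    intro n
    refine H1rad_mul (hf (k n)) _ (contDiff_const.sub (hstC (b n))) (fun x => ?_)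
      (c := Cst) (fun x => ?_)
    · have h1 := Real.smoothTransition.nonneg (x - b n)
      have h2 := Real.smoothTransition.le_one (x - b n)
      rw [abs_le]; constructor <;> linarith
    · have hd : deriv (fun x => 1 - Real.smoothTransition (x - b n)) x
          = -(deriv Real.smoothTransition (x - b n)) :=
        ((hasDerivAt_st_shift (b n) x).const_sub 1).deriv
      rw [hd, abs_neg]; exact hCst _
  have hhrad : ∀ n, H1rad (fun x => Real.smoothTransition (x - (b n + 1)) * f (k n) x) := by
    intro n
    refine H1rad_mul (hf (k n)) _ (hstC (b n + 1)) (fun x => ?_) (c := Cst) (fun x => ?_)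
    · rw [abs_le]
      exact ⟨by linarith [Real.smoothTransition.nonneg (x - (b n + 1))],
        Real.smoothTransition.le_one _⟩
    · rw [(hasDerivAt_st_shift (b n + 1) x).deriv]; exact hCst _
  have hrrad : ∀ n, H1rad (fun x =>
      (Real.smoothTransition (x - b n) - Real.smoothTransition (x - (b n + 1))) * f (k n) x) := by
    intro n
    refine H1rad_mul (hf (k n)) _ ((hstC (b n)).sub (hstC (b n + 1))) (fun x => ?_)
      (c := Cst + Cst) (fun x => ?_)
    · have h1 := Real.smoothTransition.nonneg (x - b n)
      have h2 := Real.smoothTransition.le_one (x - b n)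
      have h3 := Real.smoothTransition.nonneg (x - (b n + 1))
      have h4 := Real.smoothTransition.le_one (x - (b n + 1))
      rw [abs_le]; constructor <;> linarith
    · have hd : deriv (fun x => Real.smoothTransition (x - b n)
          - Real.smoothTransition (x - (b n + 1))) x
          = deriv Real.smoothTransition (x - b n) - deriv Real.smoothTransition (x - (b n + 1)) :=
        ((hasDerivAt_st_shift (b n) x).sub (hasDerivAt_st_shift (b n + 1) x)).deriv
      rw [hd]
      exact (abs_sub _ _).trans (add_le_add (hCst _) (hCst _))
  refine ⟨k, hkmono,
    (fun n x => (1 - Real.smoothTransition (x - b n)) * f (k n) x),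
    (fun n x => Real.smoothTransition (x - (b n + 1)) * f (k n) x),
    (fun n x => (Real.smoothTransition (x - b n) - Real.smoothTransition (x - (b n + 1)))
      * f (k n) x),
    (fun n => b n + 1), ?_, ?_, ?_, ?_⟩
  · exact tendsto_atTop_mono (fun n => by have := hbn n; linarith) tendsto_natCast_atTop_atTop
  · exact fun n => ⟨hgrad n, hhrad n, hrrad n⟩
  · intro n x; ring
  · refine Filter.Eventually.of_forall fun n => ⟨?_, ?_, ?_, ?_, ?_⟩
    · intro x hx hxR
      beta_reduce
      rw [Real.smoothTransition.zero_of_nonpos (by linarith [hbR n])]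
      ring
    · intro x hx
      beta_reduce
      rw [Real.smoothTransition.one_of_one_le (by linarith [hbRk n])]
      ring
    · intro x
      rcases le_or_gt x (b n + 1) with h | h
      · right
        beta_reduce
        rw [Real.smoothTransition.zero_of_nonpos (by linarith)]
        ring
      · left
        beta_reduce
        rw [Real.smoothTransition.one_of_one_le (by linarith)]
        ring
    · intro x hx hxle
      beta_reduce
      simp only [] at hxle
      rw [Real.smoothTransition.zero_of_nonpos (by linarith)]
      ring
    · have hest := remainder_est (hf (k n)) (hb0 n) hCst0 hCst (hrrad n)
      have h3 := hb3 n
      have hKMε : Kh (fun x => (Real.smoothTransition (x - b n)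
            - Real.smoothTransition (x - (b n + 1))) * f (k n) x)
          + Mh (fun x => (Real.smoothTransition (x - b n)
            - Real.smoothTransition (x - (b n + 1))) * f (k n) x) ≤ ε^2 := by
        refine le_trans (hest.trans (mul_le_mul_of_nonneg_left h3 hMcpos.le)) ?_
        rw [show (8*Cst^2+3)*(C^2/(N:ℝ)) = (8*Cst^2+3)*C^2/(N:ℝ) from by ring,
          div_le_iff₀ hNpos]
        linarith [hNbound]
      rw [H1norm]
      calc Real.sqrt _ ≤ Real.sqrt (ε^2) := Real.sqrt_le_sqrt hKMε
        _ = ε := Real.sqrt_sq hε.le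
end

section
/- (Decoupling decomposition near the origin.) Let R > 0, let (R_k) be a sequence of positive reals with R_k → ∞, let ε > 0, and let (f_k) be a sequence in H¹_rad(H³) with sup_k ‖f_k‖_{H¹} < ∞. Then there exist a strictly increasing map k : ℕ → ℕ, functions g_n, h_n, r_n ∈ H¹_rad(H³), and a sequence R̃_n → ∞ such that f_{k(n)} = g_n + h_n + r_n for all n, and for all sufficiently large n: g_n(r) = f_{k(n)}(r) for all r ≥ R^{−1}; h_n(r) = f_{k(n)}(r) for all r ≤ R_{k(n)}^{−1}; g_n and h_n have disjoint supports; h_n(r) = 0 for all r ≥ R̃_n^{−1}; and ‖r_n‖_{H¹} ≤ ε. -/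
open MeasureTheory Set Filter

set_option maxHeartbeats 1600000

lemma H1rad_zero : H1rad (fun _ => (0:ℝ)) := by
  refine ⟨contDiffOn_const, ?_, ?_⟩
  · have h : (fun r : ℝ => (deriv (fun _ => (0:ℝ)) r) ^ 2 * Real.sinh r ^ 2) = fun _ => 0 := by
      funext r; simp
    rw [h]; exact integrableOn_zero
  · have h : (fun r : ℝ => ((fun _ : ℝ => (0:ℝ)) r) ^ 2 * Real.sinh r ^ 2) = fun _ => 0 := by
      funext r; simp
    rw [h]; exact integrableOn_zero

lemma st_deriv_zero {t : ℝ} (h : t < 0 ∨ 1 < t) : deriv Real.smoothTransition t = 0 := by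
  rcases h with h | h
  · have he : Real.smoothTransition =ᶠ[nhds t] (fun _ => (0:ℝ)) := by
      filter_upwards [Iio_mem_nhds h] with y hy
      exact Real.smoothTransition.zero_of_nonpos (le_of_lt hy)
    rw [he.deriv_eq]; simp
  · have he : Real.smoothTransition =ᶠ[nhds t] (fun _ => (1:ℝ)) := by
      filter_upwards [Ioi_mem_nhds h] with y hy
      exact Real.smoothTransition.one_of_one_le (le_of_lt hy)
    rw [he.deriv_eq]; simp

lemma exists_stBound : ∃ B : ℝ, 1 ≤ B ∧ ∀ t : ℝ, |deriv Real.smoothTransition t| ≤ B := by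
  have hc : Continuous (deriv Real.smoothTransition) :=
    (Real.smoothTransition.contDiff (n := 1)).continuous_deriv (by norm_cast)
  obtain ⟨B0, hB0⟩ := (isCompact_Icc (a := (0:ℝ)) (b := 1)).exists_bound_of_continuousOn
    hc.continuousOn
  refine ⟨max B0 1, le_max_right _ _, fun t => ?_⟩
  by_cases ht : t ∈ Icc (0:ℝ) 1
  · simpa using le_trans (hB0 t ht) (le_max_left _ _)
  · have h0 : t < 0 ∨ 1 < t := by
      rcases lt_or_ge t 0 with h | h
      · exact Or.inl h
      · rcases le_or_gt t 1 with h1 | h1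
        · exact absurd ⟨h, h1⟩ ht
        · exact Or.inr h1
    rw [st_deriv_zero h0]
    simp only [abs_zero]
    exact le_trans zero_le_one (le_max_right _ _)

lemma sinh_le_two_mul {x : ℝ} (h0 : 0 ≤ x) (h1 : x ≤ 1) : Real.sinh x ≤ 2 * x := by
  have hexp : Real.exp x ≤ 1 + 2 * x := by
    have hc := convexOn_exp.2 (mem_univ (0:ℝ)) (mem_univ (1:ℝ))
      (by linarith : (0:ℝ) ≤ 1 - x) h0 (by ring)
    have he : Real.exp 1 ≤ 3 := by
      have := Real.exp_one_lt_d9; linarith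
    simp only [smul_eq_mul, mul_zero, mul_one, zero_add, Real.exp_zero] at hc
    nlinarith
  have hexp2 : 1 - x ≤ Real.exp (-x) := by
    have := Real.add_one_le_exp (-x); linarith
  rw [Real.sinh_eq]
  linarith

lemma hardy_aux (F : ℝ → ℝ) (hF : H1rad F) (a : ℝ) (ha : 0 < a) (ha2 : a ≤ 1/2) :
    ∫ x in Ioc a 1, F x ^ 2 ≤
      20 * ((∫ x in Ioi (0:ℝ), (deriv F x) ^ 2 * Real.sinh x ^ 2) +
        ∫ x in Ioi (0:ℝ), F x ^ 2 * Real.sinh x ^ 2) := by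
  obtain ⟨hC1, hIK, hIM⟩ := hF
  set Kt := ∫ x in Ioi (0:ℝ), (deriv F x) ^ 2 * Real.sinh x ^ 2 with hKtdef
  set Mt := ∫ x in Ioi (0:ℝ), F x ^ 2 * Real.sinh x ^ 2 with hMtdef
  have hKt0 : 0 ≤ Kt := setIntegral_nonneg measurableSet_Ioi (fun x _ => by positivity)
  have hMt0 : 0 ≤ Mt := setIntegral_nonneg measurableSet_Ioi (fun x _ => by positivity)
  have hFc : ContinuousOn F (Ioi 0) := hC1.continuousOn
  have hFdc : ContinuousOn (deriv F) (Ioi 0) := hC1.continuousOn_deriv_of_isOpen isOpen_Ioi le_rfl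
  have hsub12 : Icc (1/2 : ℝ) 1 ⊆ Ioi 0 := fun x hx => lt_of_lt_of_le (by norm_num) hx.1
  have hsubA : Icc a 1 ⊆ Ioi (0:ℝ) := fun x hx => lt_of_lt_of_le ha hx.1
  -- choose minimizer b of F^2 on [1/2, 1]
  obtain ⟨b, hbmem, hbmin⟩ := (isCompact_Icc (a := (1/2:ℝ)) (b := 1)).exists_isMinOn
      ⟨1/2, by norm_num, by norm_num⟩ ((hFc.mono hsub12).pow 2)
  have hb12 : (1/2 : ℝ) ≤ b := hbmem.1
  have hb1 : b ≤ 1 := hbmem.2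
  have hab : a ≤ b := le_trans ha2 hb12
  have hbpos : (0:ℝ) < b := lt_of_lt_of_le (by norm_num) hb12
  -- integrability of F^2 on Icc a 1
  have hint1 : IntegrableOn (fun x => F x ^ 2) (Icc a 1) :=
    ((hFc.mono hsubA).pow 2).integrableOn_compact isCompact_Icc
  have hIb : IntegrableOn (fun x => F x ^ 2) (Ioc (1/2:ℝ) 1) :=
    hint1.mono_set (fun x hx => ⟨le_trans ha2 (le_of_lt hx.1), hx.2⟩)
  -- min value controlled by Mt
  have hminM : F b ^ 2 ≤ 8 * Mt := by
    have hconst : ∫ _x in Ioc (1/2:ℝ) 1, (F b ^ 2) = (1/2) * F b ^ 2 := by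
      rw [setIntegral_const, Real.volume_real_Ioc_of_le (by norm_num)]
      rw [smul_eq_mul]
      norm_num
    have h1 : (1/2) * F b ^ 2 ≤ ∫ x in Ioc (1/2:ℝ) 1, F x ^ 2 := by
      rw [← hconst]
      refine setIntegral_mono_on ?_ hIb measurableSet_Ioc ?_
      · exact integrableOn_const measure_Ioc_lt_top.ne
      · exact fun x hx => (isMinOn_iff.mp hbmin) x (Ioc_subset_Icc_self hx)
    have h2 : ∫ x in Ioc (1/2:ℝ) 1, F x ^ 2 ≤ ∫ x in Ioc (1/2:ℝ) 1, 4 * (F x ^ 2 * Real.sinh x ^ 2) := by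
      refine setIntegral_mono_on hIb ((hIM.mono_set (fun x hx => lt_trans (by norm_num) hx.1)).const_mul 4) measurableSet_Ioc ?_
      intro x hx
      have hxs : x ≤ Real.sinh x := Real.self_le_sinh_iff.mpr (by linarith [hx.1])
      have hx12 : (1/2:ℝ) < x := hx.1
      have hs2 : (1/4:ℝ) ≤ Real.sinh x ^ 2 := by nlinarith
      nlinarith [sq_nonneg (F x), mul_nonneg (sq_nonneg (F x)) (by linarith : (0:ℝ) ≤ Real.sinh x ^ 2 - 1/4)]
    have h3 : ∫ x in Ioc (1/2:ℝ) 1, 4 * (F x ^ 2 * Real.sinh x ^ 2) ≤ 4 * Mt := by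
      rw [MeasureTheory.integral_const_mul]
      have : ∫ x in Ioc (1/2:ℝ) 1, F x ^ 2 * Real.sinh x ^ 2 ≤ Mt := by
        refine setIntegral_mono_set hIM (MeasureTheory.ae_of_all _ (fun x => by positivity)) ?_
        have hss : Ioc (1/2:ℝ) 1 ⊆ Ioi (0:ℝ) := fun x hx => lt_trans (by norm_num) hx.1
        exact hss.eventuallyLE
      linarith
    linarith
  -- integration by parts on [a, b]
  have huIcc : uIcc a b = Icc a b := uIcc_of_le hab
  have hmem : ∀ x ∈ uIcc a b, x ∈ Ioi (0:ℝ) := by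
    intro x hx
    rw [huIcc] at hx
    exact lt_of_lt_of_le ha hx.1
  have hFd' : ∀ x ∈ Ioi (0:ℝ), HasDerivAt F (deriv F x) x := fun x hx =>
    ((hC1.contDiffAt (isOpen_Ioi.mem_nhds hx)).differentiableAt one_ne_zero).hasDerivAt
  have hv'cont : ContinuousOn (fun x => 2 * F x ^ 1 * deriv F x) (uIcc a b) := by
    refine (ContinuousOn.mul (continuousOn_const.mul ((hFc.mono hmem).pow 1)) (hFdc.mono hmem))
  have hibp := intervalIntegral.integral_mul_deriv_eq_deriv_mul
      (u := fun x => x) (u' := fun _ => (1:ℝ)) (v := fun x => F x ^ 2)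
      (v' := fun x => 2 * F x ^ 1 * deriv F x)
      (fun x _ => hasDerivAt_id x) (fun x hx => (hFd' x (hmem x hx)).pow 2)
      intervalIntegrable_const (hv'cont.intervalIntegrable)
  have hibp' : ∫ x in a..b, x * (2 * F x ^ 1 * deriv F x)
      = b * F b ^ 2 - a * F a ^ 2 - ∫ x in a..b, F x ^ 2 := by
    simpa using hibp
  have habs : |∫ x in a..b, x * (2 * F x ^ 1 * deriv F x)| ≤
      ∫ x in a..b, ((1/2) * F x ^ 2 + 2 * ((deriv F x) ^ 2 * Real.sinh x ^ 2)) := by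
    refine le_trans (intervalIntegral.abs_integral_le_integral_abs hab) ?_
    refine intervalIntegral.integral_mono_on hab ?_ ?_ ?_
    · refine ContinuousOn.intervalIntegrable ?_
      exact (ContinuousOn.mul (continuousOn_id) hv'cont).abs
    · refine ContinuousOn.intervalIntegrable ?_
      refine ContinuousOn.add (continuousOn_const.mul ((hFc.mono hmem).pow 2)) ?_
      exact continuousOn_const.mul (((hFdc.mono hmem).pow 2).mul
        (Real.continuous_sinh.continuousOn.pow 2))
    · intro x hx
      have hx0 : (0:ℝ) < x := lt_of_lt_of_le ha hx.1
      have hxs : x ≤ Real.sinh x := Real.self_le_sinh_iff.mpr hx0.le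
      have hx2 : x^2 ≤ Real.sinh x ^ 2 := by nlinarith
      have h2 : x^2 * (deriv F x)^2 ≤ Real.sinh x ^2 * (deriv F x)^2 :=
        mul_le_mul_of_nonneg_right hx2 (sq_nonneg _)
      rw [abs_le]
      constructor <;> nlinarith [sq_nonneg (F x + 2*x*deriv F x), sq_nonneg (F x - 2*x*deriv F x)]
  have hKpart : ∫ x in a..b, ((1/2) * F x ^ 2 + 2 * ((deriv F x) ^ 2 * Real.sinh x ^ 2))
      = (1/2) * (∫ x in a..b, F x ^ 2) + 2 * ∫ x in a..b, (deriv F x) ^ 2 * Real.sinh x ^ 2 := by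
    rw [intervalIntegral.integral_add, intervalIntegral.integral_const_mul,
      intervalIntegral.integral_const_mul]
    · exact (ContinuousOn.intervalIntegrable (continuousOn_const.mul ((hFc.mono hmem).pow 2)))
    · exact (ContinuousOn.intervalIntegrable (continuousOn_const.mul (((hFdc.mono hmem).pow 2).mul
        (Real.continuous_sinh.continuousOn.pow 2))))
  have hKb : ∫ x in a..b, (deriv F x) ^ 2 * Real.sinh x ^ 2 ≤ Kt := by
    rw [intervalIntegral.integral_of_le hab]
    refine setIntegral_mono_set hIK (MeasureTheory.ae_of_all _ (fun x => by positivity)) ?_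
    have hss : Ioc a b ⊆ Ioi (0:ℝ) := fun x hx => lt_of_lt_of_le ha (le_of_lt hx.1)
    exact hss.eventuallyLE
  have hI0 : 0 ≤ ∫ x in a..b, F x ^ 2 := by
    rw [intervalIntegral.integral_of_le hab]
    exact setIntegral_nonneg measurableSet_Ioc (fun x _ => by positivity)
  have hIbound : (∫ x in a..b, F x ^ 2) ≤ 2 * F b ^ 2 + 4 * Kt := by
    have h2 : b * F b ^ 2 ≤ F b ^ 2 := by nlinarith [sq_nonneg (F b)]
    have h3 : 0 ≤ a * F a ^ 2 := by positivity
    have h4 := habs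
    rw [hKpart] at h4
    have h5 := abs_le.mp h4
    have h6 := hKb
    linarith [h5.1, h5.2, hibp']
  -- combine
  have hsplit : ∫ x in Ioc a 1, F x ^ 2 = (∫ x in Ioc a b, F x ^ 2) + ∫ x in Ioc b 1, F x ^ 2 := by
    rw [← MeasureTheory.setIntegral_union (Set.Ioc_disjoint_Ioc_of_le le_rfl) measurableSet_Ioc
      (hint1.mono_set (fun x hx => ⟨hx.1.le, le_trans hx.2 hb1⟩))
      (hint1.mono_set (fun x hx => ⟨le_trans hab hx.1.le, hx.2⟩)),
      Set.Ioc_union_Ioc_eq_Ioc hab hb1]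
  have hIocab : ∫ x in Ioc a b, F x ^ 2 = ∫ x in a..b, F x ^ 2 :=
    (intervalIntegral.integral_of_le hab).symm
  have hlast : ∫ x in Ioc b 1, F x ^ 2 ≤ 4 * Mt := by
    have hsub' : Ioc b 1 ⊆ Ioc (1/2:ℝ) 1 := fun x hx => ⟨lt_of_le_of_lt hb12 hx.1, hx.2⟩
    have h1 : ∫ x in Ioc b 1, F x ^ 2 ≤ ∫ x in Ioc (1/2:ℝ) 1, F x ^ 2 := by
      refine setIntegral_mono_set hIb (MeasureTheory.ae_of_all _ (fun x => by positivity))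
        hsub'.eventuallyLE
    have h2 : ∫ x in Ioc (1/2:ℝ) 1, F x ^ 2 ≤ ∫ x in Ioc (1/2:ℝ) 1, 4 * (F x ^ 2 * Real.sinh x ^ 2) := by
      refine setIntegral_mono_on hIb ((hIM.mono_set (fun x hx => lt_trans (by norm_num) hx.1)).const_mul 4) measurableSet_Ioc ?_
      intro x hx
      have hxs : x ≤ Real.sinh x := Real.self_le_sinh_iff.mpr (by linarith [hx.1])
      have hx12 : (1/2:ℝ) < x := hx.1
      have hs2 : (1/4:ℝ) ≤ Real.sinh x ^ 2 := by nlinarith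
      nlinarith [sq_nonneg (F x), mul_nonneg (sq_nonneg (F x)) (by linarith : (0:ℝ) ≤ Real.sinh x ^ 2 - 1/4)]
    have h3 : ∫ x in Ioc (1/2:ℝ) 1, 4 * (F x ^ 2 * Real.sinh x ^ 2) ≤ 4 * Mt := by
      rw [MeasureTheory.integral_const_mul]
      have h4 : ∫ x in Ioc (1/2:ℝ) 1, F x ^ 2 * Real.sinh x ^ 2 ≤ Mt := by
        refine setIntegral_mono_set hIM (MeasureTheory.ae_of_all _ (fun x => by positivity)) ?_
        have hss : Ioc (1/2:ℝ) 1 ⊆ Ioi (0:ℝ) := fun x hx => lt_trans (by norm_num) hx.1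
        exact hss.eventuallyLE
      linarith
    linarith
  rw [hsplit, hIocab]
  linarith [hIbound, hminM]

lemma H1rad_mul_aux (F G q q' : ℝ → ℝ) (M₀ : ℝ) (hF : H1rad F)
    (hGq : ∀ x ∈ Ioi (0:ℝ), G x = q x * F x)
    (hqc : ContDiffOn ℝ 1 q (Ioi 0))
    (hqd : ∀ x ∈ Ioi (0:ℝ), HasDerivAt q (q' x) x)
    (hq1 : ∀ x ∈ Ioi (0:ℝ), |q x| ≤ 1)
    (hq2 : ∀ x ∈ Ioi (0:ℝ), |q' x| ≤ M₀) :
    H1rad G ∧ ∀ x ∈ Ioi (0:ℝ), deriv G x = q' x * F x + q x * deriv F x := by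
  have hFd : ∀ x ∈ Ioi (0:ℝ), HasDerivAt F (deriv F x) x := fun x hx =>
    ((hF.1.contDiffAt (isOpen_Ioi.mem_nhds hx)).differentiableAt one_ne_zero).hasDerivAt
  have hGd : ∀ x ∈ Ioi (0:ℝ), HasDerivAt G (q' x * F x + q x * deriv F x) x := by
    intro x hx
    refine ((hqd x hx).mul (hFd x hx)).congr_of_eventuallyEq ?_
    filter_upwards [isOpen_Ioi.mem_nhds hx] with y hy
    exact hGq y hy
  have hder : ∀ x ∈ Ioi (0:ℝ), deriv G x = q' x * F x + q x * deriv F x :=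
    fun x hx => (hGd x hx).deriv
  have hGc : ContDiffOn ℝ 1 G (Ioi 0) := (hqc.mul hF.1).congr hGq
  have hM0 : 0 ≤ M₀ := le_trans (abs_nonneg _) (hq2 1 (mem_Ioi.mpr one_pos))
  refine ⟨⟨hGc, ?_, ?_⟩, hder⟩
  · have hmeas : AEStronglyMeasurable (fun r => (deriv G r) ^ 2 * Real.sinh r ^ 2)
        (volume.restrict (Ioi 0)) := by
      refine ContinuousOn.aestronglyMeasurable ?_ measurableSet_Ioi
      exact ((hGc.continuousOn_deriv_of_isOpen isOpen_Ioi le_rfl).pow 2).mul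
        (Real.continuous_sinh.continuousOn.pow 2)
    refine MeasureTheory.Integrable.mono'
      (g := fun r => 2 * M₀ ^ 2 * (F r ^ 2 * Real.sinh r ^ 2)
        + 2 * ((deriv F r) ^ 2 * Real.sinh r ^ 2)) ?_ hmeas ?_
    · exact (hF.2.2.const_mul _).add (hF.2.1.const_mul 2)
    · rw [MeasureTheory.ae_restrict_iff' measurableSet_Ioi]
      refine MeasureTheory.ae_of_all _ (fun x hx => ?_)
      have h2 := abs_le.mp (hq1 x hx)
      have h3 := abs_le.mp (hq2 x hx)
      have hb : (deriv G x) ^ 2 ≤ 2 * M₀ ^ 2 * F x ^ 2 + 2 * (deriv F x) ^ 2 := by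
        rw [hder x hx]
        nlinarith [sq_le_sq' h3.1 h3.2, sq_le_sq' h2.1 h2.2,
          sq_nonneg (q' x * F x - q x * deriv F x), sq_nonneg (F x), sq_nonneg (deriv F x)]
      have hn : ‖(deriv G x) ^ 2 * Real.sinh x ^ 2‖ = (deriv G x) ^ 2 * Real.sinh x ^ 2 := by
        rw [Real.norm_eq_abs, abs_of_nonneg (by positivity)]
      rw [hn]
      calc (deriv G x) ^ 2 * Real.sinh x ^ 2
          ≤ (2 * M₀ ^ 2 * F x ^ 2 + 2 * (deriv F x) ^ 2) * Real.sinh x ^ 2 :=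
            mul_le_mul_of_nonneg_right hb (sq_nonneg _)
        _ = 2 * M₀ ^ 2 * (F x ^ 2 * Real.sinh x ^ 2) + 2 * ((deriv F x) ^ 2 * Real.sinh x ^ 2) := by
            ring
  · have hmeas : AEStronglyMeasurable (fun r => G r ^ 2 * Real.sinh r ^ 2)
        (volume.restrict (Ioi 0)) := by
      refine ContinuousOn.aestronglyMeasurable ?_ measurableSet_Ioi
      exact ((hGc.continuousOn).pow 2).mul (Real.continuous_sinh.continuousOn.pow 2)
    refine MeasureTheory.Integrable.mono'
      (g := fun r => F r ^ 2 * Real.sinh r ^ 2) hF.2.2 hmeas ?_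
    rw [MeasureTheory.ae_restrict_iff' measurableSet_Ioi]
    refine MeasureTheory.ae_of_all _ (fun x hx => ?_)
    have h2 := abs_le.mp (hq1 x hx)
    have hn : ‖G x ^ 2 * Real.sinh x ^ 2‖ = G x ^ 2 * Real.sinh x ^ 2 := by
      rw [Real.norm_eq_abs, abs_of_nonneg (by positivity)]
    rw [hn, hGq x hx]
    have hq2' : q x ^ 2 ≤ 1 := by nlinarith
    have hfin : (q x * F x) ^ 2 * Real.sinh x ^ 2 ≤ F x ^ 2 * Real.sinh x ^ 2 := by
      nlinarith [sq_nonneg (F x * Real.sinh x),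
        mul_nonneg (mul_nonneg (sub_nonneg.mpr hq2') (sq_nonneg (F x))) (sq_nonneg (Real.sinh x))]
    simpa using hfin

lemma pigeon (w : ℝ → ℝ) (hw : IntegrableOn w (Ioi 0)) (hw0 : ∀ x, 0 ≤ w x)
    (r : ℕ → ℝ) (hr0 : 0 < r 0) (hmono : Monotone r) (J : ℕ) (hJ : 0 < J) :
    ∃ j, j < J ∧ ∫ x in Ioc (r j) (r (j+1)), w x ≤ (∫ x in Ioi (0:ℝ), w x) / J := by
  have hrpos : ∀ j, 0 < r j := fun j => lt_of_lt_of_le hr0 (hmono (Nat.zero_le j))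
  have hsub : ∀ j k : ℕ, Ioc (r j) (r k) ⊆ Ioi (0:ℝ) := fun j k x hx => lt_trans (hrpos j) hx.1
  have hint : ∀ j k : ℕ, IntegrableOn w (Ioc (r j) (r k)) := fun j k => hw.mono_set (hsub j k)
  have key : ∀ m : ℕ, (∑ j ∈ Finset.range m, ∫ x in Ioc (r j) (r (j+1)), w x)
      = ∫ x in Ioc (r 0) (r m), w x := by
    intro m
    induction m with
    | zero => simp
    | succ m ih =>
      rw [Finset.sum_range_succ, ih,
        ← MeasureTheory.setIntegral_union (Set.Ioc_disjoint_Ioc_of_le le_rfl) measurableSet_Ioc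
          (hint 0 m) (hint m (m+1)),
        Set.Ioc_union_Ioc_eq_Ioc (hmono (Nat.zero_le m)) (hmono (Nat.le_succ m))]
  by_contra hcon
  push_neg at hcon
  have hlt : (∫ x in Ioi (0:ℝ), w x) < ∑ j ∈ Finset.range J, ∫ x in Ioc (r j) (r (j+1)), w x := by
    calc ∫ x in Ioi (0:ℝ), w x = ∑ _j ∈ Finset.range J, (∫ x in Ioi (0:ℝ), w x) / J := by
          rw [Finset.sum_const, Finset.card_range, nsmul_eq_mul]
          field_simp
      _ < _ := by
          refine Finset.sum_lt_sum_of_nonempty (Finset.nonempty_range_iff.mpr hJ.ne') ?_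
          exact fun j hj => hcon j (Finset.mem_range.mp hj)
  rw [key J] at hlt
  have hle : ∫ x in Ioc (r 0) (r J), w x ≤ ∫ x in Ioi (0:ℝ), w x := by
    refine setIntegral_mono_set hw (MeasureTheory.ae_of_all _ (fun x => hw0 x)) ?_
    exact (hsub 0 J).eventuallyLE
  linarith
lemma main_construct (R ε C B ℓ : ℝ) (J : ℕ) (hR : 0 < R) (hε : 0 < ε) (hC : 1 ≤ C)
    (hB : 1 ≤ B) (hBd : ∀ t, |deriv Real.smoothTransition t| ≤ B)
    (hℓdef : ℓ = 36 * B * C / ε) (hJ : 6 * C ^ 2 / ε ^ 2 ≤ (J : ℝ)) (hJ0 : 0 < J)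
    (F : ℝ → ℝ) (hF : H1rad F) (hFC : Kh F + Mh F ≤ C ^ 2)
    (T : ℝ) (hT : 4 * ℓ * J + 2 * |Real.log R| + 2 ≤ T) :
    ∃ g h rr : ℝ → ℝ, H1rad g ∧ H1rad h ∧ H1rad rr ∧
      (∀ x, F x = g x + h x + rr x) ∧
      (∀ x, R⁻¹ ≤ x → g x = F x) ∧
      (∀ x, 0 < x → x ≤ Real.exp (-T) → h x = F x) ∧
      (∀ x, g x = 0 ∨ h x = 0) ∧
      (∀ x, Real.exp (-(T/2)) ≤ x → h x = 0) ∧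
      H1norm rr ≤ ε := by
  have hB0 : (0:ℝ) < B := lt_of_lt_of_le one_pos hB
  have hC0 : (0:ℝ) < C := lt_of_lt_of_le one_pos hC
  have hℓ0 : 0 < ℓ := by rw [hℓdef]; positivity
  have hJ1 : (1:ℝ) ≤ J := by exact_mod_cast hJ0
  have hT2 : 2 ≤ T := by nlinarith [abs_nonneg (Real.log R)]
  have h4ℓJ : 4 * ℓ * J ≤ T := by nlinarith [abs_nonneg (Real.log R)]
  have hlogRT : 2 * |Real.log R| ≤ T := by nlinarith
  set Kt := ∫ x in Ioi (0:ℝ), (deriv F x) ^ 2 * Real.sinh x ^ 2 with hKtdef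
  set Mt := ∫ x in Ioi (0:ℝ), F x ^ 2 * Real.sinh x ^ 2 with hMtdef
  have hKhF : Kh F = 4 * Real.pi * Kt := rfl
  have hMhF : Mh F = 4 * Real.pi * Mt := rfl
  have hKt0 : 0 ≤ Kt := setIntegral_nonneg measurableSet_Ioi (fun x _ => by positivity)
  have hMt0 : 0 ≤ Mt := setIntegral_nonneg measurableSet_Ioi (fun x _ => by positivity)
  set w : ℝ → ℝ := fun x => (deriv F x) ^ 2 * Real.sinh x ^ 2 + F x ^ 2 * Real.sinh x ^ 2 with hwdef
  have hw : IntegrableOn w (Ioi (0:ℝ)) := hF.2.1.add hF.2.2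
  have hw0 : ∀ x, 0 ≤ w x := fun x => by rw [hwdef]; positivity
  have hTot : (∫ x in Ioi (0:ℝ), w x) = Kt + Mt := MeasureTheory.integral_add hF.2.1 hF.2.2
  have hFc : ContinuousOn F (Ioi 0) := hF.1.continuousOn
  have hFdc : ContinuousOn (deriv F) (Ioi 0) := hF.1.continuousOn_deriv_of_isOpen isOpen_Ioi le_rfl
  -- pigeonhole
  have hmono : Monotone (fun j : ℕ => Real.exp (-T + 2 * ℓ * j)) := by
    intro i j hij
    apply Real.exp_le_exp.mpr
    have hij' : (i:ℝ) ≤ j := by exact_mod_cast hij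
    nlinarith
  obtain ⟨j₀, hj₀J, hμ⟩ := pigeon w hw hw0 (fun j : ℕ => Real.exp (-T + 2 * ℓ * j))
    (Real.exp_pos _) hmono J hJ0
  set p : ℝ := -T + 2 * ℓ * j₀ with hpdef
  set S : ℝ := p + 2 * ℓ with hSdef
  set a : ℝ := Real.exp p with hadef
  set bb : ℝ := Real.exp S with hbbdef
  have ha0 : 0 < a := Real.exp_pos _
  have hbb0 : 0 < bb := Real.exp_pos _
  have hab : a ≤ bb := by
    have hpS : p ≤ S := by rw [hSdef]; linarith
    rw [hadef, hbbdef]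
    exact Real.exp_le_exp.mpr hpS
  have hpT : -T ≤ p := by
    have hj0' : (0:ℝ) ≤ 2 * ℓ * j₀ := by positivity
    rw [hpdef]; linarith
  have hST : S ≤ -(T/2) := by
    have hj1 : ((j₀:ℝ) + 1) ≤ J := by exact_mod_cast hj₀J
    rw [hSdef, hpdef]; nlinarith
  have hμ2 : ∫ x in Ioc a bb, w x ≤ (Kt + Mt) / J := by
    rw [hTot] at hμ
    have e2 : Real.exp (-T + 2 * ℓ * ((j₀ + 1 : ℕ):ℝ)) = bb := by
      rw [hbbdef, hSdef, hpdef]; congr 1; push_cast; ring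
    rw [← e2]
    exact hμ
  have hbb12 : bb ≤ 1/2 := by
    have h1 : S ≤ -1 := by linarith
    have h2 : bb ≤ Real.exp (-1) := Real.exp_le_exp.mpr h1
    have h3 : Real.exp (-1) ≤ 1/2 := by
      rw [Real.exp_neg, inv_le_comm₀ (Real.exp_pos 1) (by norm_num)]
      have := Real.add_one_le_exp 1
      linarith
    linarith
  have ha12 : a ≤ 1/2 := le_trans hab hbb12
  have hSlogR : S ≤ Real.log R⁻¹ := by
    rw [Real.log_inv]
    linarith [le_abs_self (Real.log R)]
  -- smooth transition helpers
  have hst0 : ∀ u x : ℝ, Real.log x ≤ u →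
      Real.smoothTransition ((Real.log x - u) / ℓ) = 0 := fun u x hlt =>
    Real.smoothTransition.zero_of_nonpos (div_nonpos_of_nonpos_of_nonneg (by linarith) hℓ0.le)
  have hst1 : ∀ u x : ℝ, u + ℓ ≤ Real.log x →
      Real.smoothTransition ((Real.log x - u) / ℓ) = 1 := fun u x hlt =>
    Real.smoothTransition.one_of_one_le ((le_div_iff₀ hℓ0).mpr (by linarith))
  have hstd : ∀ (u x : ℝ), 0 < x →
      HasDerivAt (fun y => Real.smoothTransition ((Real.log y - u) / ℓ))
      (deriv Real.smoothTransition ((Real.log x - u) / ℓ) * (x⁻¹ / ℓ)) x := by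
    intro u x hx
    have h1 : HasDerivAt (fun y => (Real.log y - u) / ℓ) (x⁻¹ / ℓ) x :=
      ((Real.hasDerivAt_log hx.ne').sub_const u).div_const ℓ
    have h2 : HasDerivAt Real.smoothTransition
        (deriv Real.smoothTransition ((Real.log x - u) / ℓ)) ((Real.log x - u) / ℓ) :=
      (((Real.smoothTransition.contDiff (n := 1)).differentiable (by norm_cast)) _).hasDerivAt
    exact h2.comp x h1
  have hstd0 : ∀ u x : ℝ, (Real.log x < u ∨ u + ℓ < Real.log x) →
      deriv Real.smoothTransition ((Real.log x - u) / ℓ) = 0 := by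
    intro u x hor
    apply st_deriv_zero
    rcases hor with hlt | hlt
    · exact Or.inl (div_neg_of_neg_of_pos (by linarith) hℓ0)
    · exact Or.inr ((lt_div_iff₀ hℓ0).mpr (by linarith))
  have hstcd : ∀ u : ℝ,
      ContDiffOn ℝ 1 (fun y => Real.smoothTransition ((Real.log y - u) / ℓ)) (Ioi 0) := by
    intro u
    have hlog : ContDiffOn ℝ 1 Real.log (Ioi 0) :=
      Real.contDiffOn_log.mono (fun x hx => by simpa using ne_of_gt (mem_Ioi.mp hx))
    exact (Real.smoothTransition.contDiff (n := 1)).comp_contDiffOn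
      ((hlog.sub contDiffOn_const).div_const ℓ)
  -- pieces
  set ψ : ℝ → ℝ := fun x => Real.smoothTransition ((Real.log x - (p + ℓ)) / ℓ) with hψdef
  set χ : ℝ → ℝ := fun x => 1 - Real.smoothTransition ((Real.log x - p) / ℓ) with hχdef
  set φ : ℝ → ℝ := fun x => Real.smoothTransition ((Real.log x - p) / ℓ)
    - Real.smoothTransition ((Real.log x - (p + ℓ)) / ℓ) with hφdef
  set g : ℝ → ℝ := fun x => if 0 < x then ψ x * F x else 0 with hgdef
  set h : ℝ → ℝ := fun x => if 0 < x then χ x * F x else F x with hhdef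
  set rr : ℝ → ℝ := fun x => if 0 < x then φ x * F x else 0 with hrrdef
  set ψ' : ℝ → ℝ := fun x =>
    deriv Real.smoothTransition ((Real.log x - (p + ℓ)) / ℓ) * (x⁻¹ / ℓ) with hψ'def
  set χ' : ℝ → ℝ := fun x =>
    -(deriv Real.smoothTransition ((Real.log x - p) / ℓ) * (x⁻¹ / ℓ)) with hχ'def
  set φ' : ℝ → ℝ := fun x => deriv Real.smoothTransition ((Real.log x - p) / ℓ) * (x⁻¹ / ℓ)
    - deriv Real.smoothTransition ((Real.log x - (p + ℓ)) / ℓ) * (x⁻¹ / ℓ) with hφ'def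
  have hψd : ∀ x ∈ Ioi (0:ℝ), HasDerivAt ψ (ψ' x) x := fun x hx => hstd (p + ℓ) x hx
  have hχd : ∀ x ∈ Ioi (0:ℝ), HasDerivAt χ (χ' x) x := fun x hx => (hstd p x hx).const_sub 1
  have hφd : ∀ x ∈ Ioi (0:ℝ), HasDerivAt φ (φ' x) x := fun x hx =>
    (hstd p x hx).sub (hstd (p + ℓ) x hx)
  -- uniform derivative bounds
  have hbnd : ∀ u x : ℝ, Real.exp u ≤ x →
      |deriv Real.smoothTransition ((Real.log x - u) / ℓ) * (x⁻¹ / ℓ)|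
        ≤ B * ((Real.exp u)⁻¹ / ℓ) := by
    intro u x hux
    have hx0 : 0 < x := lt_of_lt_of_le (Real.exp_pos u) hux
    rw [abs_mul, abs_of_nonneg (by positivity : (0:ℝ) ≤ x⁻¹ / ℓ)]
    have h2 : x⁻¹ ≤ (Real.exp u)⁻¹ := by
      apply inv_anti₀ (Real.exp_pos u) hux
    have h3 : x⁻¹ / ℓ ≤ (Real.exp u)⁻¹ / ℓ := by gcongr
    exact mul_le_mul (hBd _) h3 (by positivity) (by linarith)
  have hbnd2 : ∀ u x : ℝ, p ≤ u → 0 < x →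
      |deriv Real.smoothTransition ((Real.log x - u) / ℓ) * (x⁻¹ / ℓ)| ≤ B * (a⁻¹ / ℓ) := by
    intro u x hpu hx
    rcases lt_or_ge x (Real.exp u) with hlt | hge
    · have hlog : Real.log x < u := (Real.log_lt_iff_lt_exp hx).mpr hlt
      rw [hstd0 u x (Or.inl hlog)]
      rw [zero_mul, abs_zero]
      positivity
    · refine le_trans (hbnd u x hge) ?_
      have : (Real.exp u)⁻¹ ≤ a⁻¹ := by
        rw [hadef]
        exact inv_anti₀ ha0 (by rw [hadef] at *; exact Real.exp_le_exp.mpr hpu)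
      gcongr
  have hbangle : 0 ≤ B * (a⁻¹ / ℓ) := by positivity
  have hbndψ : ∀ x ∈ Ioi (0:ℝ), |ψ' x| ≤ B * (a⁻¹ / ℓ) := fun x hx =>
    hbnd2 (p + ℓ) x (by linarith) (mem_Ioi.mp hx)
  have hbndχ : ∀ x ∈ Ioi (0:ℝ), |χ' x| ≤ B * (a⁻¹ / ℓ) := by
    intro x hx
    simp only [hχ'def]
    rw [abs_neg]
    exact hbnd2 p x le_rfl (mem_Ioi.mp hx)
  have hbndφ : ∀ x ∈ Ioi (0:ℝ), |φ' x| ≤ 2 * (B * (a⁻¹ / ℓ)) := by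
    intro x hx
    simp only [hφ'def]
    refine le_trans (abs_sub _ _) ?_
    have h1 := hbnd2 p x le_rfl (mem_Ioi.mp hx)
    have h2 := hbnd2 (p + ℓ) x (by linarith) (mem_Ioi.mp hx)
    linarith
  -- pointwise size bounds
  have hψ1 : ∀ x ∈ Ioi (0:ℝ), |ψ x| ≤ 1 := fun x _ => by
    simp only [hψdef]
    rw [abs_le]
    exact ⟨by linarith [Real.smoothTransition.nonneg ((Real.log x - (p + ℓ)) / ℓ)],
      Real.smoothTransition.le_one _⟩
  have hχ1 : ∀ x ∈ Ioi (0:ℝ), |χ x| ≤ 1 := fun x _ => by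
    simp only [hχdef]
    rw [abs_le]
    constructor
    · linarith [Real.smoothTransition.le_one ((Real.log x - p) / ℓ)]
    · linarith [Real.smoothTransition.nonneg ((Real.log x - p) / ℓ)]
  have hφ1 : ∀ x ∈ Ioi (0:ℝ), |φ x| ≤ 1 := fun x _ => by
    simp only [hφdef]
    rw [abs_le]
    constructor
    · linarith [Real.smoothTransition.le_one ((Real.log x - (p + ℓ)) / ℓ),
        Real.smoothTransition.nonneg ((Real.log x - p) / ℓ)]
    · linarith [Real.smoothTransition.le_one ((Real.log x - p) / ℓ),
        Real.smoothTransition.nonneg ((Real.log x - (p + ℓ)) / ℓ)]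
  -- H1rad of the pieces
  obtain ⟨hH1g, _⟩ := H1rad_mul_aux F g ψ ψ' (B * (a⁻¹ / ℓ)) hF
    (fun x hx => by rw [hgdef]; simp [mem_Ioi.mp hx]) (hstcd (p + ℓ)) hψd hψ1 hbndψ
  obtain ⟨hH1h, _⟩ := H1rad_mul_aux F h χ χ' (B * (a⁻¹ / ℓ)) hF
    (fun x hx => by rw [hhdef]; simp [mem_Ioi.mp hx]) (contDiffOn_const.sub (hstcd p)) hχd hχ1 hbndχ
  obtain ⟨hH1rr, hderrr⟩ := H1rad_mul_aux F rr φ φ' (2 * (B * (a⁻¹ / ℓ))) hF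
    (fun x hx => by rw [hrrdef]; simp [mem_Ioi.mp hx]) ((hstcd p).sub (hstcd (p + ℓ))) hφd hφ1 hbndφ
  refine ⟨g, h, rr, hH1g, hH1h, hH1rr, ?_, ?_, ?_, ?_, ?_, ?_⟩
  -- sum
  · intro x
    by_cases hx : 0 < x
    · simp only [hgdef, hhdef, hrrdef, hψdef, hχdef, hφdef, if_pos hx]
      ring
    · simp only [hgdef, hhdef, hrrdef, if_neg hx]
      ring
  -- g = F outside
  · intro x hx
    have hx0 : 0 < x := lt_of_lt_of_le (inv_pos.mpr hR) hx
    have hlog : S ≤ Real.log x := by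
      rw [Real.le_log_iff_exp_le hx0]
      calc Real.exp S ≤ Real.exp (Real.log R⁻¹) := Real.exp_le_exp.mpr hSlogR
        _ = R⁻¹ := Real.exp_log (inv_pos.mpr hR)
        _ ≤ x := hx
    have hψx : ψ x = 1 := by
      simp only [hψdef]
      exact hst1 (p + ℓ) x (by rw [hSdef] at hlog; linarith)
    simp only [hgdef]
    rw [if_pos hx0, hψx, one_mul]
  -- h = F near 0
  · intro x hx0 hxT
    have hlog : Real.log x ≤ p := by
      have := (Real.log_le_iff_le_exp hx0).mpr hxT
      linarith
    have hχx : χ x = 1 := by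
      simp only [hχdef]
      rw [hst0 p x hlog]
      ring
    simp only [hhdef]
    rw [if_pos hx0, hχx, one_mul]
  -- disjoint supports
  · intro x
    by_cases hx : 0 < x
    · rcases le_or_gt (Real.log x) (p + ℓ) with hc | hc
      · left
        simp only [hgdef, hψdef, if_pos hx]
        rw [hst0 (p + ℓ) x hc, zero_mul]
      · right
        simp only [hhdef, hχdef, if_pos hx]
        rw [hst1 p x hc.le]
        ring
    · left
      simp only [hgdef, if_neg hx]
  -- h vanishes away from 0
  · intro x hx
    have hx0 : 0 < x := lt_of_lt_of_le (Real.exp_pos _) hx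
    have hlog : p + ℓ ≤ Real.log x := by
      have h1 : -(T/2) ≤ Real.log x := by
        rw [Real.le_log_iff_exp_le hx0]
        exact hx
      rw [hSdef] at hST
      linarith
    simp only [hhdef, hχdef, if_pos hx0]
    rw [hst1 p x hlog]
    ring
  -- remainder is small
  · have hIccsub : Icc a bb ⊆ Ioi (0:ℝ) := fun x hx => lt_of_lt_of_le ha0 hx.1
    have hIcc1sub : Icc a 1 ⊆ Ioi (0:ℝ) := fun x hx => lt_of_lt_of_le ha0 hx.1
    -- vanishing of φ, φ' off the band
    have hφ0 : ∀ x : ℝ, 0 < x → x ∉ Icc a bb → φ x = 0 := by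
      intro x hx0 hnot
      rw [mem_Icc, not_and_or] at hnot
      rcases hnot with hlt | hlt
      · rw [not_le] at hlt
        have hlog : Real.log x < p := (Real.log_lt_iff_lt_exp hx0).mpr hlt
        simp only [hφdef]
        rw [hst0 p x hlog.le, hst0 (p + ℓ) x (by linarith)]
        ring
      · rw [not_le] at hlt
        have hlog : S < Real.log x := (Real.lt_log_iff_exp_lt hx0).mpr hlt
        rw [hSdef] at hlog
        simp only [hφdef]
        rw [hst1 p x (by linarith), hst1 (p + ℓ) x (by linarith)]
        ring
    have hφ'0 : ∀ x : ℝ, 0 < x → x ∉ Icc a bb → φ' x = 0 := by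
      intro x hx0 hnot
      rw [mem_Icc, not_and_or] at hnot
      rcases hnot with hlt | hlt
      · rw [not_le] at hlt
        have hlog : Real.log x < p := (Real.log_lt_iff_lt_exp hx0).mpr hlt
        simp only [hφ'def]
        rw [hstd0 p x (Or.inl hlog), hstd0 (p + ℓ) x (Or.inl (by linarith))]
        ring
      · rw [not_le] at hlt
        have hlog : S < Real.log x := (Real.lt_log_iff_exp_lt hx0).mpr hlt
        rw [hSdef] at hlog
        simp only [hφ'def]
        rw [hstd0 p x (Or.inr (by linarith)), hstd0 (p + ℓ) x (Or.inr (by linarith))]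
        ring
    -- M part
    have hwIcc : IntegrableOn w (Icc a bb) := hw.mono_set hIccsub
    have hIndW : IntegrableOn ((Icc a bb).indicator w) (Ioi (0:ℝ)) :=
      (hwIcc.integrable_indicator measurableSet_Icc).integrableOn
    have hindeq : ∀ v : ℝ → ℝ, IntegrableOn v (Icc a bb) →
        (∫ x in Ioi (0:ℝ), (Icc a bb).indicator v x) = ∫ x in Ioc a bb, v x := by
      intro v hv
      rw [MeasureTheory.integral_indicator measurableSet_Icc,
        MeasureTheory.Measure.restrict_restrict measurableSet_Icc,
        Set.inter_eq_left.mpr hIccsub]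
      exact MeasureTheory.integral_Icc_eq_integral_Ioc
    have hI2 : (∫ x in Ioi (0:ℝ), rr x ^ 2 * Real.sinh x ^ 2) ≤ ∫ x in Ioc a bb, w x := by
      rw [← hindeq w hwIcc]
      refine setIntegral_mono_on hH1rr.2.2 hIndW measurableSet_Ioi ?_
      intro x hx
      have hx0 : 0 < x := mem_Ioi.mp hx
      have hrrx : rr x = φ x * F x := by rw [hrrdef]; simp [hx0]
      by_cases hmem : x ∈ Icc a bb
      · rw [Set.indicator_of_mem hmem, hrrx]
        simp only [hwdef]
        have h1 := abs_le.mp (hφ1 x hx)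
        have hφsq' : φ x ^ 2 ≤ 1 := by
          nlinarith only [h1.1, h1.2, mul_nonneg (sub_nonneg.mpr h1.2)
            (by linarith only [h1.1] : (0:ℝ) ≤ 1 + φ x)]
        nlinarith only [sq_nonneg (deriv F x * Real.sinh x),
          mul_nonneg (mul_nonneg (sub_nonneg.mpr hφsq')
            (sq_nonneg (F x))) (sq_nonneg (Real.sinh x))]
      · rw [Set.indicator_of_notMem hmem, hrrx, hφ0 x hx0 hmem]
        simp
    -- local pointwise derivative bound
    have hbndloc : ∀ x : ℝ, 0 < x → |φ' x| ≤ 2 * B * (x⁻¹ / ℓ) := by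
      intro x hx
      simp only [hφ'def]
      have e : ∀ u : ℝ, |deriv Real.smoothTransition ((Real.log x - u) / ℓ) * (x⁻¹ / ℓ)|
          ≤ B * (x⁻¹ / ℓ) := by
        intro u
        rw [abs_mul, abs_of_nonneg (by positivity : (0:ℝ) ≤ x⁻¹ / ℓ)]
        exact mul_le_mul_of_nonneg_right (hBd _) (by positivity)
      calc |deriv Real.smoothTransition ((Real.log x - p) / ℓ) * (x⁻¹ / ℓ)
            - deriv Real.smoothTransition ((Real.log x - (p + ℓ)) / ℓ) * (x⁻¹ / ℓ)|
          ≤ |deriv Real.smoothTransition ((Real.log x - p) / ℓ) * (x⁻¹ / ℓ)|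
            + |deriv Real.smoothTransition ((Real.log x - (p + ℓ)) / ℓ) * (x⁻¹ / ℓ)| :=
            abs_sub _ _
        _ ≤ 2 * B * (x⁻¹ / ℓ) := by linarith [e p, e (p + ℓ)]
    -- K part
    have hDin : IntegrableOn (fun x => 32 * B ^ 2 / ℓ ^ 2 * F x ^ 2 + 2 * w x) (Icc a bb) := by
      refine MeasureTheory.Integrable.add ?_ (hwIcc.const_mul 2)
      exact (((hFc.mono hIccsub).pow 2).integrableOn_compact isCompact_Icc).const_mul _
    have hIndD : IntegrableOn
        ((Icc a bb).indicator (fun x => 32 * B ^ 2 / ℓ ^ 2 * F x ^ 2 + 2 * w x)) (Ioi (0:ℝ)) :=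
      (hDin.integrable_indicator measurableSet_Icc).integrableOn
    have hI1 : (∫ x in Ioi (0:ℝ), (deriv rr x) ^ 2 * Real.sinh x ^ 2)
        ≤ 32 * B ^ 2 / ℓ ^ 2 * (∫ x in Ioc a bb, F x ^ 2) + 2 * ∫ x in Ioc a bb, w x := by
      have step : (∫ x in Ioi (0:ℝ), (deriv rr x) ^ 2 * Real.sinh x ^ 2)
          ≤ ∫ x in Ioi (0:ℝ),
            (Icc a bb).indicator (fun x => 32 * B ^ 2 / ℓ ^ 2 * F x ^ 2 + 2 * w x) x := by
        refine setIntegral_mono_on hH1rr.2.1 hIndD measurableSet_Ioi ?_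
        intro x hx
        have hx0 : 0 < x := mem_Ioi.mp hx
        rw [hderrr x hx]
        by_cases hmem : x ∈ Icc a bb
        · rw [Set.indicator_of_mem hmem]
          have hx1 : x ≤ 1 := le_trans hmem.2 (by linarith)
          have hsinh : Real.sinh x ≤ 2 * x := sinh_le_two_mul hx0.le hx1
          have hs0 : 0 ≤ Real.sinh x := le_trans hx0.le (Real.self_le_sinh_iff.mpr hx0.le)
          have h1 := abs_le.mp (hbndloc x hx0)
          have step1 : (φ' x) ^ 2 * Real.sinh x ^ 2 ≤ 16 * B ^ 2 / ℓ ^ 2 := by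
            have hs1 : (φ' x) ^ 2 ≤ (2 * B * (x⁻¹ / ℓ)) ^ 2 := sq_le_sq' h1.1 h1.2
            have hs2 : Real.sinh x ^ 2 ≤ (2 * x) ^ 2 := by
              nlinarith only [hsinh, hs0, hx0.le]
            have heq : (2 * B * (x⁻¹ / ℓ)) ^ 2 * (2 * x) ^ 2 = 16 * B ^ 2 / ℓ ^ 2 := by
              field_simp
              ring
            calc (φ' x) ^ 2 * Real.sinh x ^ 2
                ≤ (2 * B * (x⁻¹ / ℓ)) ^ 2 * (2 * x) ^ 2 :=
                  mul_le_mul hs1 hs2 (sq_nonneg _) (sq_nonneg _)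
              _ = 16 * B ^ 2 / ℓ ^ 2 := heq
          have h5 : (φ' x * F x + φ x * deriv F x) ^ 2
              ≤ 2 * (φ' x * F x) ^ 2 + 2 * (φ x * deriv F x) ^ 2 := by
            nlinarith only [sq_nonneg (φ' x * F x - φ x * deriv F x)]
          have h6 : (φ' x * F x + φ x * deriv F x) ^ 2 * Real.sinh x ^ 2
              ≤ 2 * F x ^ 2 * ((φ' x) ^ 2 * Real.sinh x ^ 2)
                + 2 * (φ x) ^ 2 * ((deriv F x) ^ 2 * Real.sinh x ^ 2) := by
            calc (φ' x * F x + φ x * deriv F x) ^ 2 * Real.sinh x ^ 2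
                ≤ (2 * (φ' x * F x) ^ 2 + 2 * (φ x * deriv F x) ^ 2) * Real.sinh x ^ 2 :=
                  mul_le_mul_of_nonneg_right h5 (sq_nonneg _)
              _ = 2 * F x ^ 2 * ((φ' x) ^ 2 * Real.sinh x ^ 2)
                + 2 * (φ x) ^ 2 * ((deriv F x) ^ 2 * Real.sinh x ^ 2) := by ring
          have h7 : 2 * F x ^ 2 * ((φ' x) ^ 2 * Real.sinh x ^ 2)
              ≤ 2 * F x ^ 2 * (16 * B ^ 2 / ℓ ^ 2) :=
            mul_le_mul_of_nonneg_left step1 (by positivity)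
          have hφsq : (φ x) ^ 2 ≤ 1 := by
            have h2 := abs_le.mp (hφ1 x hx)
            nlinarith only [h2.1, h2.2, mul_nonneg (sub_nonneg.mpr h2.2)
              (by linarith only [h2.1] : (0:ℝ) ≤ 1 + φ x)]
          have h9 : 2 * (φ x) ^ 2 * ((deriv F x) ^ 2 * Real.sinh x ^ 2)
              ≤ 2 * ((deriv F x) ^ 2 * Real.sinh x ^ 2) := by
            nlinarith only [mul_nonneg (sub_nonneg.mpr hφsq)
              (mul_nonneg (sq_nonneg (deriv F x)) (sq_nonneg (Real.sinh x)))]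
          have h10 : (0:ℝ) ≤ F x ^ 2 * Real.sinh x ^ 2 := by positivity
          simp only [hwdef]
          calc (φ' x * F x + φ x * deriv F x) ^ 2 * Real.sinh x ^ 2
              ≤ 2 * F x ^ 2 * ((φ' x) ^ 2 * Real.sinh x ^ 2)
                + 2 * (φ x) ^ 2 * ((deriv F x) ^ 2 * Real.sinh x ^ 2) := h6
            _ ≤ 2 * F x ^ 2 * (16 * B ^ 2 / ℓ ^ 2)
                + 2 * ((deriv F x) ^ 2 * Real.sinh x ^ 2) := add_le_add h7 h9
            _ = 32 * B ^ 2 / ℓ ^ 2 * F x ^ 2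
                + 2 * ((deriv F x) ^ 2 * Real.sinh x ^ 2) := by ring
            _ ≤ 32 * B ^ 2 / ℓ ^ 2 * F x ^ 2
                + 2 * ((deriv F x) ^ 2 * Real.sinh x ^ 2 + F x ^ 2 * Real.sinh x ^ 2) := by
                linarith only [h10]
        · rw [Set.indicator_of_notMem hmem, hφ0 x hx0 hmem, hφ'0 x hx0 hmem]
          simp
      have hsplitD : (∫ x in Ioi (0:ℝ),
            (Icc a bb).indicator (fun x => 32 * B ^ 2 / ℓ ^ 2 * F x ^ 2 + 2 * w x) x)
          = 32 * B ^ 2 / ℓ ^ 2 * (∫ x in Ioc a bb, F x ^ 2) + 2 * ∫ x in Ioc a bb, w x := by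
        rw [hindeq _ hDin]
        rw [MeasureTheory.integral_add (f := fun x => 32 * B ^ 2 / ℓ ^ 2 * F x ^ 2) (g := fun x => 2 * w x)
          (((((hFc.mono hIccsub).pow 2).integrableOn_compact isCompact_Icc).mono_set
            Ioc_subset_Icc_self).const_mul (32 * B ^ 2 / ℓ ^ 2))
          ((hwIcc.mono_set Ioc_subset_Icc_self).const_mul 2),
          MeasureTheory.integral_const_mul, MeasureTheory.integral_const_mul]
      rw [← hsplitD]
      exact step
    -- Hardy bound
    have hF2int1 : IntegrableOn (fun x => F x ^ 2) (Ioc a 1) :=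
      (((hFc.mono hIcc1sub).pow 2).integrableOn_compact isCompact_Icc).mono_set
        Ioc_subset_Icc_self
    have hHB : (∫ x in Ioc a bb, F x ^ 2) ≤ ∫ x in Ioc a 1, F x ^ 2 := by
      refine setIntegral_mono_set hF2int1 (MeasureTheory.ae_of_all _ (fun x => by positivity)) ?_
      have hss : Ioc a bb ⊆ Ioc a 1 := Ioc_subset_Ioc le_rfl (by linarith)
      exact hss.eventuallyLE
    have hhardy := hardy_aux F hF a ha0 ha12
    rw [← hKtdef, ← hMtdef] at hhardy
    have hHB2 : (∫ x in Ioc a bb, F x ^ 2) ≤ 20 * (Kt + Mt) := le_trans hHB hhardy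
    -- combine
    have hKM : Kh F + Mh F = 4 * Real.pi * (Kt + Mt) := by rw [hKhF, hMhF]; ring
    have hπ : (0:ℝ) < Real.pi := Real.pi_pos
    have hF2nn : 0 ≤ ∫ x in Ioc a bb, F x ^ 2 :=
      setIntegral_nonneg measurableSet_Ioc (fun x _ => by positivity)
    have hμnn : 0 ≤ ∫ x in Ioc a bb, w x :=
      setIntegral_nonneg measurableSet_Ioc (fun x _ => hw0 x)
    have hKrr : Kh rr = 4 * Real.pi * ∫ x in Ioi (0:ℝ), (deriv rr x) ^ 2 * Real.sinh x ^ 2 := rfl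
    have hMrr : Mh rr = 4 * Real.pi * ∫ x in Ioi (0:ℝ), rr x ^ 2 * Real.sinh x ^ 2 := rfl
    have hKMC : 4 * Real.pi * (Kt + Mt) ≤ C ^ 2 := by rw [← hKM]; exact hFC
    have hKtMt0 : 0 ≤ Kt + Mt := by linarith
    have hJpos : (0:ℝ) < J := by exact_mod_cast hJ0
    have htotal : Kh rr + Mh rr ≤ ε ^ 2 := by
      have hIA : (∫ x in Ioi (0:ℝ), (deriv rr x) ^ 2 * Real.sinh x ^ 2)
          ≤ 32 * B ^ 2 / ℓ ^ 2 * (20 * (Kt + Mt)) + 2 * ((Kt + Mt) / J) := by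
        have h1 : 32 * B ^ 2 / ℓ ^ 2 * (∫ x in Ioc a bb, F x ^ 2)
            ≤ 32 * B ^ 2 / ℓ ^ 2 * (20 * (Kt + Mt)) :=
          mul_le_mul_of_nonneg_left hHB2 (by positivity)
        linarith only [hI1, hμ2, h1]
      have hIB : (∫ x in Ioi (0:ℝ), rr x ^ 2 * Real.sinh x ^ 2) ≤ (Kt + Mt) / J :=
        le_trans hI2 hμ2
      have hKrr2 : Kh rr ≤ 4 * Real.pi * (32 * B ^ 2 / ℓ ^ 2 * (20 * (Kt + Mt)) + 2 * ((Kt + Mt) / J)) := by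
        rw [hKrr]
        exact mul_le_mul_of_nonneg_left hIA (by positivity)
      have hMrr2 : Mh rr ≤ 4 * Real.pi * ((Kt + Mt) / J) := by
        rw [hMrr]
        exact mul_le_mul_of_nonneg_left hIB (by positivity)
      have heq2 : 4 * Real.pi * (32 * B ^ 2 / ℓ ^ 2 * (20 * (Kt + Mt)) + 2 * ((Kt + Mt) / J))
          + 4 * Real.pi * ((Kt + Mt) / J)
          = 640 * B ^ 2 / ℓ ^ 2 * (4 * Real.pi * (Kt + Mt))
            + 3 * (4 * Real.pi * (Kt + Mt)) / J := by
        field_simp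
        ring
      have hb1 : 640 * B ^ 2 / ℓ ^ 2 * (4 * Real.pi * (Kt + Mt))
          ≤ 640 * B ^ 2 / ℓ ^ 2 * C ^ 2 :=
        mul_le_mul_of_nonneg_left hKMC (by positivity)
      have hb2 : 3 * (4 * Real.pi * (Kt + Mt)) / J ≤ 3 * C ^ 2 / J := by gcongr
      have h640 : 640 * B ^ 2 / ℓ ^ 2 * C ^ 2 ≤ ε ^ 2 / 2 := by
        have heq3 : 640 * B ^ 2 / ℓ ^ 2 * C ^ 2 = 640 / 1296 * ε ^ 2 := by
          rw [hℓdef]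
          field_simp
          ring
        rw [heq3]
        nlinarith only [sq_nonneg ε]
      have h3CJ : 3 * C ^ 2 / J ≤ ε ^ 2 / 2 := by
        rw [div_le_iff₀ hJpos]
        have hε2 : (0:ℝ) < ε ^ 2 := by positivity
        have h6 : 6 * C ^ 2 ≤ (J:ℝ) * ε ^ 2 := by
          have h7 := (div_le_iff₀ hε2).mp hJ
          linarith only [h7]
        linarith only [h6]
      linarith only [hKrr2, hMrr2, heq2, hb1, hb2, h640, h3CJ]
    have hnorm : H1norm rr = Real.sqrt (Kh rr + Mh rr) := rfl
    rw [hnorm]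
    calc Real.sqrt (Kh rr + Mh rr) ≤ Real.sqrt (ε ^ 2) := Real.sqrt_le_sqrt htotal
      _ = ε := Real.sqrt_sq hε.le

/-- Decoupling decomposition near the origin. -/
theorem decoupling_decomposition_near (R : ℝ) (hR : 0 < R)
    (Rk : ℕ → ℝ) (hRkpos : ∀ k, 0 < Rk k) (hRk : Tendsto Rk atTop atTop)
    (ε : ℝ) (hε : 0 < ε)
    (f : ℕ → ℝ → ℝ) (hf : ∀ k, H1rad (f k))
    (hbdd : ∃ C : ℝ, ∀ k, H1norm (f k) ≤ C) :
    ∃ k : ℕ → ℕ, StrictMono k ∧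
    ∃ g h rr : ℕ → ℝ → ℝ, ∃ Rt : ℕ → ℝ,
      Tendsto Rt atTop atTop ∧
      (∀ n, H1rad (g n) ∧ H1rad (h n) ∧ H1rad (rr n)) ∧
      (∀ n, ∀ x, f (k n) x = g n x + h n x + rr n x) ∧
      (∀ᶠ n in atTop,
        (∀ x : ℝ, R⁻¹ ≤ x → g n x = f (k n) x) ∧
        (∀ x : ℝ, 0 < x → x ≤ (Rk (k n))⁻¹ → h n x = f (k n) x) ∧
        (∀ x : ℝ, g n x = 0 ∨ h n x = 0) ∧
        (∀ x : ℝ, (Rt n)⁻¹ ≤ x → h n x = 0) ∧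
        H1norm (rr n) ≤ ε) := by
  obtain ⟨C₀, hC₀⟩ := hbdd
  set C : ℝ := max C₀ 1 with hCdef
  have hC : 1 ≤ C := le_max_right _ _
  have hCk : ∀ k, Kh (f k) + Mh (f k) ≤ C ^ 2 := by
    intro k
    have h1 : H1norm (f k) ≤ C := le_trans (hC₀ k) (le_max_left _ _)
    have h2 : 0 ≤ Kh (f k) := by
      have : 0 ≤ ∫ r in Ioi (0:ℝ), (deriv (f k) r) ^ 2 * Real.sinh r ^ 2 :=
        setIntegral_nonneg measurableSet_Ioi (fun x _ => by positivity)
      have hπ := Real.pi_pos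
      unfold Kh
      positivity
    have h3 : 0 ≤ Mh (f k) := by
      have : 0 ≤ ∫ r in Ioi (0:ℝ), (f k) r ^ 2 * Real.sinh r ^ 2 :=
        setIntegral_nonneg measurableSet_Ioi (fun x _ => by positivity)
      have hπ := Real.pi_pos
      unfold Mh
      positivity
    have h4 : Kh (f k) + Mh (f k) = H1norm (f k) ^ 2 := by
      rw [H1norm, Real.sq_sqrt (by linarith)]
    rw [h4]
    have h5 : 0 ≤ H1norm (f k) := Real.sqrt_nonneg _
    nlinarith only [h1, h5, hC]
  obtain ⟨B, hB, hBd⟩ := exists_stBound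
  set ℓ : ℝ := 36 * B * C / ε with hℓdef
  set J : ℕ := ⌈6 * C ^ 2 / ε ^ 2⌉₊ with hJdef
  have hJ0 : 0 < J := Nat.ceil_pos.mpr (by positivity)
  have hJ : 6 * C ^ 2 / ε ^ 2 ≤ (J : ℝ) := Nat.le_ceil _
  have key : ∀ n, ∃ g h rr : ℝ → ℝ,
      (H1rad g ∧ H1rad h ∧ H1rad rr) ∧
      (∀ x, f n x = g x + h x + rr x) ∧
      (4 * ℓ * J + 2 * |Real.log R| + 2 ≤ Real.log (Rk n) →
        ((∀ x : ℝ, R⁻¹ ≤ x → g x = f n x) ∧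
        (∀ x : ℝ, 0 < x → x ≤ (Rk n)⁻¹ → h x = f n x) ∧
        (∀ x : ℝ, g x = 0 ∨ h x = 0) ∧
        (∀ x : ℝ, (Real.exp (Real.log (Rk n) / 2))⁻¹ ≤ x → h x = 0) ∧
        H1norm rr ≤ ε)) := by
    intro n
    by_cases hn : 4 * ℓ * J + 2 * |Real.log R| + 2 ≤ Real.log (Rk n)
    · obtain ⟨g, h, rr, hg, hh, hrr, hsum, hg2, hh2, hdisj, hh3, hrem⟩ :=
        main_construct R ε C B ℓ J hR hε hC hB hBd hℓdef hJ hJ0 (f n) (hf n) (hCk n)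
          (Real.log (Rk n)) hn
      refine ⟨g, h, rr, ⟨hg, hh, hrr⟩, hsum, fun _ => ⟨hg2, ?_, hdisj, ?_, hrem⟩⟩
      · intro x hx0 hxb
        refine hh2 x hx0 ?_
        rw [Real.exp_neg, Real.exp_log (hRkpos n)]
        exact hxb
      · intro x hx
        refine hh3 x ?_
        rw [Real.exp_neg]
        exact hx
    · exact ⟨f n, fun _ => 0, fun _ => 0, ⟨hf n, H1rad_zero, H1rad_zero⟩,
        fun x => by ring, fun hcon => absurd hcon hn⟩
  choose g h rr h1 h2 h3 using key
  refine ⟨id, strictMono_id, g, h, rr, fun n => Real.exp (Real.log (Rk n) / 2), ?_, h1, h2, ?_⟩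
  · apply Real.tendsto_exp_atTop.comp
    apply Filter.Tendsto.atTop_div_const (by norm_num : (0:ℝ) < 2)
    exact Real.tendsto_log_atTop.comp hRk
  · have hev : ∀ᶠ n in atTop, 4 * ℓ * J + 2 * |Real.log R| + 2 ≤ Real.log (Rk n) :=
      (Real.tendsto_log_atTop.comp hRk).eventually_ge_atTop _
    exact hev.mono (fun n hn => h3 n hn)
end
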